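/- arXiv:1207.0063 — 7 statements merged into one kernel-verified Lean document; each statement's English description precedes it below -/
import Mathlib

section
/- An odd composite squarefree number n = p₁·p₂·⋯·p_t (with distinct odd primes p_i, each coprime to a) is a strong pseudoprime to base a if and only if n is a pseudoprime to base a (i.e., a^(n-1) ≡ 1 mod n) and the 2-adic valuations of the multiplicative orders of a modulo p₁, ..., p_t are all equal. -/
lemma my_crt (t : ℕ) (p : Fin t → ℕ) (hp : ∀ i, (p i).Prime)
    (hinj : Function.Injective p) (x : ℤ) (h : ∀ i, (p i : ℤ) ∣ x) :
    ((∏ i, p i : ℕ) : ℤ) ∣ x := by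
  push_cast
  refine Finset.prod_dvd_of_coprime ?_ (fun i _ => h i)
  intro i _ j _ hij
  have hc : Nat.Coprime (p i) (p j) :=
    (Nat.coprime_primes (hp i) (hp j)).2 fun e => hij (hinj e)
  exact Int.isCoprime_iff_gcd_eq_one.mpr (by exact_mod_cast hc)

lemma my_val_le {m k : ℕ} (hk : k ≠ 0) (h : m ∣ k) :
    padicValNat 2 m ≤ padicValNat 2 k := by
  have h2 : (2:ℕ) ^ padicValNat 2 m ∣ k := (pow_padicValNat_dvd).trans h
  rcases (padicValNat_dvd_iff _ _).1 h2 with h | h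
  · exact absurd h hk
  · exact h

lemma my_val_two_pow_mul (j d : ℕ) (hd : Odd d) :
    padicValNat 2 (2 ^ j * d) = j := by
  have hd0 : d ≠ 0 := by rintro rfl; simp [Nat.odd_iff] at hd
  rw [padicValNat.mul (by positivity) hd0, padicValNat.prime_pow,
    padicValNat.eq_zero_of_not_dvd (by rwa [Nat.odd_iff, ← Nat.two_dvd_ne_zero] at hd), add_zero]

lemma my_dvd_refine {m d : ℕ} (hm : m ≠ 0) {j : ℕ} (h : m ∣ 2 ^ j * d) :
    m ∣ 2 ^ (padicValNat 2 m) * d := by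
  set v := padicValNat 2 m
  set c := m / 2 ^ v with hc
  have hfac : 2 ^ v * c = m := by
    have := Nat.ordProj_mul_ordCompl_eq_self m 2
    rwa [Nat.factorization_def m Nat.prime_two] at this
  have hcodd : ¬ 2 ∣ c := by
    have := Nat.not_dvd_ordCompl Nat.prime_two hm
    rwa [Nat.factorization_def m Nat.prime_two] at this
  have hcdvd : c ∣ 2 ^ j * d := (Dvd.intro_left _ hfac).trans h
  have hccop : Nat.Coprime c (2 ^ j) :=
    ((Nat.Prime.coprime_iff_not_dvd Nat.prime_two).2 hcodd).symm.pow_right _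
  have : c ∣ d := hccop.dvd_of_dvd_mul_left hcdvd
  calc m = 2 ^ v * c := hfac.symm
    _ ∣ 2 ^ v * d := mul_dvd_mul_left _ this

def StrongPsp (a n : ℕ) : Prop :=
  Odd n ∧ 1 < n ∧ ¬ n.Prime ∧
    ∃ s d : ℕ, Odd d ∧ n - 1 = 2 ^ s * d ∧
      ((a : ZMod n) ^ d = 1 ∨ ∃ k < s, (a : ZMod n) ^ (2 ^ k * d) = -1)

theorem stmt0 (t : ℕ) (p : Fin t → ℕ) (a n : ℕ)
    (hp : ∀ i, (p i).Prime) (hodd : ∀ i, Odd (p i))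
    (hinj : Function.Injective p)
    (hn : n = ∏ i, p i) (hodd' : Odd n) (hcomp : ¬ n.Prime) (h1 : 1 < n)
    (hcop : ∀ i, Nat.Coprime a (p i)) :
    StrongPsp a n ↔
      (a ^ (n - 1) ≡ 1 [MOD n] ∧ ∀ i j,
        padicValNat 2 (orderOf (a : ZMod (p i))) =
          padicValNat 2 (orderOf (a : ZMod (p j)))) := by
  haveI : NeZero n := ⟨by omega⟩
  have hpn : ∀ i, p i ∣ n := fun i => hn ▸ Finset.dvd_prod_of_mem _ (Finset.mem_univ i)
  -- translation of power congruences to integer divisibility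
  have t1 : ∀ (N : ℕ), N ≠ 0 → ∀ m : ℕ,
      ((a : ZMod N) ^ m = 1 ↔ (N:ℤ) ∣ (a:ℤ) ^ m - 1) := by
    intro N hN m
    haveI : NeZero N := ⟨hN⟩
    constructor
    · intro h
      rw [← ZMod.intCast_zmod_eq_zero_iff_dvd]
      push_cast
      rw [h]; ring
    · intro h
      have := (ZMod.intCast_zmod_eq_zero_iff_dvd _ N).2 h
      push_cast at this
      exact sub_eq_zero.1 this
  have t2 : ∀ (N : ℕ), N ≠ 0 → ∀ m : ℕ,
      ((a : ZMod N) ^ m = -1 ↔ (N:ℤ) ∣ (a:ℤ) ^ m + 1) := by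
    intro N hN m
    haveI : NeZero N := ⟨hN⟩
    constructor
    · intro h
      rw [← ZMod.intCast_zmod_eq_zero_iff_dvd]
      push_cast
      rw [h]; ring
    · intro h
      have := (ZMod.intCast_zmod_eq_zero_iff_dvd _ N).2 h
      push_cast at this
      linear_combination this
  have hp0 : ∀ i, p i ≠ 0 := fun i => (hp i).pos.ne'
  have key1 : ∀ m : ℕ, ((a : ZMod n) ^ m = 1 ↔ ∀ i, (a : ZMod (p i)) ^ m = 1) := by
    intro m
    rw [t1 n (NeZero.ne n) m]
    constructor
    · intro h i
      rw [t1 (p i) (hp0 i) m]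
      exact dvd_trans (by exact_mod_cast hpn i) h
    · intro h
      rw [hn]
      exact my_crt t p hp hinj _ (fun i => (t1 (p i) (hp0 i) m).1 (h i))
  have key2 : ∀ m : ℕ, ((a : ZMod n) ^ m = -1 ↔ ∀ i, (a : ZMod (p i)) ^ m = -1) := by
    intro m
    rw [t2 n (NeZero.ne n) m]
    constructor
    · intro h i
      rw [t2 (p i) (hp0 i) m]
      exact dvd_trans (by exact_mod_cast hpn i) h
    · intro h
      rw [hn]
      exact my_crt t p hp hinj _ (fun i => (t2 (p i) (hp0 i) m).1 (h i))
  -- order facts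
  have hordpos : ∀ i, orderOf (a : ZMod (p i)) ≠ 0 := by
    intro i
    haveI := Fact.mk (hp i)
    have ha : (a : ZMod (p i)) ≠ 0 := by
      rw [Ne, ZMod.natCast_eq_zero_iff]
      exact (Nat.Prime.coprime_iff_not_dvd (hp i)).1 ((hcop i).symm)
    have h1' : (a : ZMod (p i)) ^ (p i - 1) = 1 := ZMod.pow_card_sub_one_eq_one ha
    have hfin : IsOfFinOrder (a : ZMod (p i)) :=
      isOfFinOrder_iff_pow_eq_one.2 ⟨p i - 1, by have := (hp i).two_le; omega, h1'⟩
    exact fun h => (orderOf_eq_zero_iff.mp h) hfin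
  have hdvd : ∀ i m, (a : ZMod (p i)) ^ m = 1 ↔ orderOf (a : ZMod (p i)) ∣ m :=
    fun i m => (orderOf_dvd_iff_pow_eq_one).symm
  have hne1 : ∀ i, (-1 : ZMod (p i)) ≠ 1 := by
    intro i
    haveI := Fact.mk (hp i)
    haveI : Fact (2 < p i) := ⟨lt_of_le_of_ne (hp i).two_le (fun e => by
      have := hodd i; rw [← e] at this; simp [Nat.odd_iff] at this)⟩
    exact ZMod.neg_one_ne_one
  have hmodeq : (a ^ (n - 1) ≡ 1 [MOD n]) ↔ (a : ZMod n) ^ (n - 1) = 1 := by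
    rw [← ZMod.natCast_eq_natCast_iff]
    push_cast
    rfl
  constructor
  · rintro ⟨-, -, -, s, d, hd, hnd, hcase⟩
    rcases hcase with hone | ⟨k, hk, hneg⟩
    · constructor
      · rw [hmodeq, hnd, pow_mul', hone, one_pow]
      · intro i j
        have hi : ∀ i, padicValNat 2 (orderOf (a : ZMod (p i))) = 0 := by
          intro i
          have : orderOf (a : ZMod (p i)) ∣ d := (hdvd i d).1 ((key1 d).1 hone i)
          refine padicValNat.eq_zero_of_not_dvd fun h2 => ?_
          rw [Nat.odd_iff, ← Nat.two_dvd_ne_zero] at hd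
          exact hd (h2.trans this)
        rw [hi i, hi j]
    · have hsq : (a : ZMod n) ^ (2 ^ (k+1) * d) = 1 := by
        have : (2:ℕ) ^ (k+1) * d = (2 ^ k * d) * 2 := by ring
        rw [this, pow_mul, hneg]; ring
      constructor
      · rw [hmodeq, hnd]
        have : (2:ℕ) ^ s * d = (2 ^ (k+1) * d) * 2 ^ (s - (k+1)) := by
          rw [mul_comm _ (2 ^ (s - (k+1))), ← mul_assoc, ← pow_add]
          congr 2
          omega
        rw [this, pow_mul, hsq, one_pow]
      · intro i j
        have hi : ∀ i, padicValNat 2 (orderOf (a : ZMod (p i))) = k + 1 := by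
          intro i
          set m := orderOf (a : ZMod (p i)) with hm
          have hdvd1 : m ∣ 2 ^ (k+1) * d := (hdvd i _).1 ((key1 _).1 hsq i)
          have hle : padicValNat 2 m ≤ k + 1 := by
            have := my_val_le (k := 2 ^ (k+1) * d)
              (Nat.mul_ne_zero (pow_ne_zero _ two_ne_zero) (by rcases hd with ⟨r, hr⟩; omega)) hdvd1
            rwa [my_val_two_pow_mul _ _ hd] at this
          have hnot : ¬ m ∣ 2 ^ k * d := by
            intro hmd
            have : (a : ZMod (p i)) ^ (2 ^ k * d) = 1 := (hdvd i _).2 hmd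
            exact hne1 i (((key2 _).1 hneg i) ▸ this)
          by_contra hne
          have hlt : padicValNat 2 m ≤ k := by omega
          have := my_dvd_refine (hordpos i) hdvd1
          exact hnot (this.trans (mul_dvd_mul_right (pow_dvd_pow 2 hlt) d))
        rw [hi i, hi j]
  · rintro ⟨hmod, hval⟩
    refine ⟨hodd', h1, hcomp, ?_⟩
    have hn1 : n - 1 ≠ 0 := by omega
    set s := padicValNat 2 (n - 1) with hs
    set d := (n - 1) / 2 ^ s with hdd
    have hfac : n - 1 = 2 ^ s * d := by
      have := Nat.ordProj_mul_ordCompl_eq_self (n-1) 2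
      rw [Nat.factorization_def (n-1) Nat.prime_two] at this
      exact this.symm
    have hdodd : Odd d := by
      have := Nat.not_dvd_ordCompl Nat.prime_two hn1
      rw [Nat.factorization_def (n-1) Nat.prime_two] at this
      rwa [Nat.odd_iff, ← Nat.two_dvd_ne_zero]
    refine ⟨s, d, hdodd, hfac, ?_⟩
    have ht0 : 0 < t := by
      rcases Nat.eq_zero_or_pos t with rfl | h
      · simp at hn; omega
      · exact h
    set i0 : Fin t := ⟨0, ht0⟩
    set v := padicValNat 2 (orderOf (a : ZMod (p i0))) with hv
    have hvall : ∀ i, padicValNat 2 (orderOf (a : ZMod (p i))) = v := fun i => hval i i0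
    have hpow : (a : ZMod n) ^ (n - 1) = 1 := hmodeq.1 hmod
    have horddvdn1 : ∀ i, orderOf (a : ZMod (p i)) ∣ n - 1 :=
      fun i => (hdvd i _).1 ((key1 _).1 hpow i)
    have hvs : v ≤ s := by
      have := my_val_le hn1 (horddvdn1 i0)
      rwa [← hv, ← hs] at this
    have hkey : (a : ZMod n) ^ (2 ^ v * d) = 1 := by
      rw [key1]
      intro i
      rw [hdvd]
      have := my_dvd_refine (hordpos i) (hfac ▸ horddvdn1 i)
      rwa [hvall i] at this
    rcases Nat.eq_zero_or_pos v with hv0 | hvpos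
    · left
      rw [hv0, pow_zero, one_mul] at hkey
      exact hkey
    · right
      refine ⟨v - 1, by omega, ?_⟩
      rw [key2]
      intro i
      have hsqr : ((a : ZMod (p i)) ^ (2 ^ (v-1) * d)) * ((a : ZMod (p i)) ^ (2 ^ (v-1) * d)) = 1 := by
        rw [← pow_add]
        have : 2 ^ (v-1) * d + 2 ^ (v-1) * d = 2 ^ v * d := by
          have : 2 ^ v = 2 ^ (v-1) * 2 := by
            rw [← pow_succ]; congr 1; omega
          rw [this]; ring
        rw [this]
        exact (key1 _).1 hkey i
      haveI := Fact.mk (hp i)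
      rcases mul_self_eq_one_iff.1 hsqr with h | h
      · exfalso
        have hdd1 : orderOf (a : ZMod (p i)) ∣ 2 ^ (v-1) * d := (hdvd i _).1 h
        have := my_val_le (k := 2 ^ (v-1) * d)
          (Nat.mul_ne_zero (pow_ne_zero _ two_ne_zero) (by rcases hdodd with ⟨r, hr⟩; omega)) hdd1
        rw [my_val_two_pow_mul _ _ hdodd, hvall i] at this
        omega
      · exact h
end

section
/- Let p and q be odd primes and a an integer coprime to pq. If the 2-adic valuation of p−1 equals the 2-adic valuation of q−1, and the 2-adic valuation of the order of a modulo p equals the 2-adic valuation of the order of a modulo q, then the Legendre symbols (a/p) and (a/q) are equal. -/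
lemma aux_valnat_le {d n : ℕ} (hd : d ≠ 0) (hn : n ≠ 0) (hdn : d ∣ n) :
    padicValNat 2 d ≤ padicValNat 2 n := by
  rw [← Nat.factorization_def d Nat.prime_two, ← Nat.factorization_def n Nat.prime_two]
  exact (Nat.factorization_le_iff_dvd hd hn).mpr hdn 2

lemma aux_padic {d n : ℕ} (hd : d ≠ 0) (hn : n ≠ 0) (hdn : d ∣ n) (h2 : 2 ∣ n) :
    d ∣ n / 2 ↔ padicValNat 2 d < padicValNat 2 n := by
  have h2d : (2 * d ∣ n) ↔ d ∣ n / 2 := by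
    obtain ⟨m, rfl⟩ := h2
    rw [Nat.mul_div_cancel_left _ (by norm_num)]
    exact mul_dvd_mul_iff_left (two_ne_zero)
  have hvm : padicValNat 2 (2 * d) = 1 + padicValNat 2 d := by
    rw [padicValNat.mul (by norm_num) hd, padicValNat.self one_lt_two]
  rw [← h2d]
  constructor
  · intro h
    have h1 := aux_valnat_le (by positivity) hn h
    omega
  · intro h
    rw [← Nat.factorization_le_iff_dvd (by positivity) hn]
    intro r
    rcases eq_or_ne r 2 with rfl | hr
    · rw [Nat.factorization_def _ Nat.prime_two, Nat.factorization_def _ Nat.prime_two, hvm]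
      omega
    · have := (Nat.factorization_le_iff_dvd hd hn).mpr hdn r
      calc (2 * d).factorization r = (Nat.factorization 2 + d.factorization) r := by
            rw [Nat.factorization_mul (by norm_num) hd]
        _ = d.factorization r := by
            have : (Nat.factorization 2) r = 0 := by
              rw [Nat.Prime.factorization Nat.prime_two, Finsupp.single_apply,
                if_neg (fun h => hr h.symm)]
            simp [this]
        _ ≤ n.factorization r := this

lemma nezero_of_coprime (p : ℕ) (a : ℤ) (hp : p.Prime) (hcp : IsCoprime a (p:ℤ)) :
    ((a : ZMod p) : ZMod p) ≠ 0 := by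
  intro h
  have : (p:ℤ) ∣ a := (ZMod.intCast_zmod_eq_zero_iff_dvd a p).mp h
  exact (Int.prime_iff_natAbs_prime.mpr (by simpa using hp)).not_unit
    (hcp.isUnit_of_dvd' this dvd_rfl)

lemma key (p : ℕ) (a : ℤ) [Fact p.Prime] (hpo : Odd p) (ha : ((a:ZMod p)) ≠ 0) :
    (legendreSym p a = 1 ↔
      padicValNat 2 (orderOf (a : ZMod p)) < padicValNat 2 (p - 1)) := by
  have hp := Fact.out (p := p.Prime)
  have hchar : ringChar (ZMod p) ≠ 2 := by
    rw [ZMod.ringChar_zmod_n]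
    rintro rfl
    exact absurd hpo (by norm_num)
  have hdvd : orderOf (a : ZMod p) ∣ p - 1 :=
    orderOf_dvd_of_pow_eq_one (ZMod.pow_card_sub_one_eq_one ha)
  have hne : p - 1 ≠ 0 := by
    rcases hpo with ⟨k, rfl⟩; have := hp.two_le; omega
  have h2 : 2 ∣ p - 1 := by
    obtain ⟨k, rfl⟩ := hpo; omega
  have hcard : Fintype.card (ZMod p) = p := ZMod.card p
  rw [legendreSym.eq_one_iff p ha, FiniteField.isSquare_iff hchar ha, hcard,
    ← orderOf_dvd_iff_pow_eq_one]
  have : p / 2 = (p - 1) / 2 := by omega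
  rw [this]
  have hdpos : orderOf (a : ZMod p) ≠ 0 := fun h => hne (Nat.eq_zero_of_zero_dvd (h ▸ hdvd))
  exact aux_padic hdpos hne hdvd h2

theorem stmt1 (p q : ℕ) (a : ℤ) (hp : p.Prime) (hq : q.Prime)
    (hpo : Odd p) (hqo : Odd q) (hcop : IsCoprime a ((p : ℤ) * q))
    (hval : padicValNat 2 (p - 1) = padicValNat 2 (q - 1))
    (hord : padicValNat 2 (orderOf (a : ZMod p)) =
      padicValNat 2 (orderOf (a : ZMod q))) :
    jacobiSym a p = jacobiSym a q := by
  haveI : Fact p.Prime := ⟨hp⟩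
  haveI : Fact q.Prime := ⟨hq⟩
  have hcp : IsCoprime a (p:ℤ) := IsCoprime.of_isCoprime_of_dvd_right hcop ⟨(q:ℤ), rfl⟩
  have hcq : IsCoprime a (q:ℤ) := IsCoprime.of_isCoprime_of_dvd_right hcop ⟨(p:ℤ), mul_comm _ _⟩
  have hap : ((a : ZMod p)) ≠ 0 := nezero_of_coprime p a hp hcp
  have haq : ((a : ZMod q)) ≠ 0 := nezero_of_coprime q a hq hcq
  rw [← jacobiSym.legendreSym.to_jacobiSym p a, ← jacobiSym.legendreSym.to_jacobiSym q a]
  have hiff : legendreSym p a = 1 ↔ legendreSym q a = 1 := by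
    rw [key p a hpo hap, key q a hqo haq, hval, hord]
  rcases legendreSym.eq_one_or_neg_one p hap with h1 | h1
  · rw [h1, hiff.mp h1]
  · rcases legendreSym.eq_one_or_neg_one q haq with h2 | h2
    · exact absurd (hiff.mpr h2) (by rw [h1]; norm_num)
    · rw [h1, h2]
end

section
/- If n is an odd composite number that is a pseudoprime to base a (a^(n-1) ≡ 1 mod n) and p² divides n for some prime p with gcd(a, p) = 1, then a^(p−1) ≡ 1 (mod p²), i.e., p is a Wieferich-like prime for base a. -/
theorem stmt4 (n a p : ℕ) (hodd : Odd n) (hcomp : ¬ n.Prime) (h1 : 1 < n)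
    (hpsp : a ^ (n - 1) ≡ 1 [MOD n]) (hp : p.Prime) (hdvd : p ^ 2 ∣ n)
    (hcop : Nat.Coprime a p) :
    a ^ (p - 1) ≡ 1 [MOD p ^ 2] := by
  have hpn : p ∣ n := dvd_trans (dvd_pow_self p two_ne_zero) hdvd
  have hne : NeZero (p ^ 2) := ⟨pow_ne_zero 2 hp.pos.ne'⟩
  have h2 : a ^ (n - 1) ≡ 1 [MOD p ^ 2] := hpsp.of_dvd hdvd
  have h3 : ((a : ZMod (p ^ 2))) ^ (n - 1) = 1 := by
    have := (ZMod.natCast_eq_natCast_iff _ _ _).mpr h2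
    push_cast at this
    exact this
  have hord1 : orderOf (a : ZMod (p ^ 2)) ∣ n - 1 := orderOf_dvd_of_pow_eq_one h3
  have hunit : IsUnit (a : ZMod (p ^ 2)) :=
    (ZMod.isUnit_iff_coprime a (p ^ 2)).mpr (hcop.pow_right 2)
  have htot : ((a : ZMod (p ^ 2))) ^ Nat.totient (p ^ 2) = 1 := by
    have := (ZMod.natCast_eq_natCast_iff _ _ _).mpr (Nat.ModEq.pow_totient (hcop.pow_right 2))
    push_cast at this
    exact this
  have hord2 : orderOf (a : ZMod (p ^ 2)) ∣ p * (p - 1) := by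
    have := orderOf_dvd_of_pow_eq_one htot
    rwa [Nat.totient_prime_pow hp (by norm_num), pow_one] at this
  have hpn1 : ¬ p ∣ (n - 1) := by
    intro h
    have hd : p ∣ n - (n - 1) := Nat.dvd_sub hpn h
    rw [Nat.sub_sub_self (le_of_lt h1)] at hd
    exact hp.one_lt.ne' (Nat.dvd_one.mp hd)
  have hcop3 : Nat.Coprime (orderOf (a : ZMod (p ^ 2))) p :=
    Nat.coprime_comm.mp (hp.coprime_iff_not_dvd.mpr fun h => hpn1 (h.trans hord1))
  have hord3 : orderOf (a : ZMod (p ^ 2)) ∣ p - 1 :=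
    (Nat.Coprime.dvd_of_dvd_mul_left hcop3 hord2)
  have h4 : ((a : ZMod (p ^ 2))) ^ (p - 1) = 1 := orderOf_dvd_iff_pow_eq_one.mp hord3
  have : ((a ^ (p - 1) : ℕ) : ZMod (p ^ 2)) = ((1 : ℕ) : ZMod (p ^ 2)) := by push_cast; exact h4
  exact (ZMod.natCast_eq_natCast_iff _ _ _).mp this
end

section
/- If n is an odd composite number divisible by p² for some prime p, and n is simultaneously a pseudoprime to base 2 and to base 3, then p satisfies both 2^(p−1) ≡ 1 (mod p²) and 3^(p−1) ≡ 1 (mod p²). -/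
lemma key5 (a n p : ℕ) (h1 : 1 < n) (hp : p.Prime) (hdvd : p ^ 2 ∣ n)
    (hpsp : a ^ (n - 1) ≡ 1 [MOD n]) : a ^ (p - 1) ≡ 1 [MOD p ^ 2] := by
  haveI : NeZero (p ^ 2) := ⟨pow_ne_zero _ hp.ne_zero⟩
  have hn1 : n - 1 ≠ 0 := by omega
  have hmod : ((a : ZMod (p ^ 2)) : ZMod (p ^ 2)) ^ (n - 1) = 1 := by
    have := (ZMod.natCast_eq_natCast_iff _ _ _).mpr (hpsp.of_dvd hdvd)
    push_cast at this
    exact this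
  have hu : IsUnit (a : ZMod (p ^ 2)) := IsUnit.of_pow_eq_one hmod hn1
  set d := orderOf (a : ZMod (p ^ 2)) with hd
  have hd1 : d ∣ n - 1 := orderOf_dvd_of_pow_eq_one hmod
  have hd2 : d ∣ p * (p - 1) := by
    have hu' := hu.unit
    have h3 : orderOf hu.unit ∣ Fintype.card (ZMod (p ^ 2))ˣ := orderOf_dvd_card
    rw [ZMod.card_units_eq_totient, Nat.totient_prime_pow hp (by norm_num)] at h3
    rw [← orderOf_units, hu.unit_spec, pow_one] at h3
    exact h3
  have hpn : p ∣ n := dvd_trans (dvd_pow_self p (by norm_num)) hdvd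
  have hnd : ¬ p ∣ d := by
    intro hpd
    have h5 : p ∣ n - 1 := hpd.trans hd1
    have h6 := Nat.dvd_sub hpn h5
    rw [Nat.sub_sub_self (by omega)] at h6
    have := Nat.le_of_dvd one_pos h6
    have := hp.one_lt
    omega
  have hcop : d.Coprime p := Nat.coprime_comm.mp (hp.coprime_iff_not_dvd.mpr hnd)
  have hdp : d ∣ p - 1 := hcop.dvd_of_dvd_mul_left hd2
  have hfin : ((a : ZMod (p ^ 2))) ^ (p - 1) = 1 := orderOf_dvd_iff_pow_eq_one.mp hdp
  have := (ZMod.natCast_eq_natCast_iff (a ^ (p - 1)) 1 (p ^ 2))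
  rw [← this]
  push_cast
  exact hfin

theorem stmt5 (n p : ℕ) (hodd : Odd n) (hcomp : ¬ n.Prime) (h1 : 1 < n)
    (hp : p.Prime) (hdvd : p ^ 2 ∣ n)
    (hpsp2 : 2 ^ (n - 1) ≡ 1 [MOD n]) (hpsp3 : 3 ^ (n - 1) ≡ 1 [MOD n]) :
    2 ^ (p - 1) ≡ 1 [MOD p ^ 2] ∧ 3 ^ (p - 1) ≡ 1 [MOD p ^ 2] := by
  exact ⟨key5 2 n p h1 hp hdvd hpsp2, key5 3 n p h1 hp hdvd hpsp3⟩
end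

section
/- Q₁₁ = 3825123056546413051 = 149491 · 747451 · 34233211 is a strong pseudoprime to base 2. -/
private lemma sq_step {n a b r r2 : ℕ} (hb : b = 2 * a) (h : 2 ^ a % n = r)
    (h2 : r * r % n = r2) : 2 ^ b % n = r2 := by
  subst hb h h2
  rw [two_mul, pow_add, Nat.mul_mod]

private lemma sqd_step {n a b r r2 : ℕ} (hb : b = 2 * a + 1) (h : 2 ^ a % n = r)
    (h2 : r * r * 2 % n = r2) : 2 ^ b % n = r2 := by
  subst hb
  have h1 : 2 ^ a ≡ r [MOD n] := h ▸ (Nat.mod_modEq (2 ^ a) n).symm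
  have h3 : 2 ^ (2 * a + 1) ≡ r * r * 2 [MOD n] := by
    rw [pow_succ, two_mul, pow_add]
    exact (h1.mul h1).mul_right 2
  rw [← h2]
  exact h3

private lemma step0 : 2 ^ 1 % 3825123056546413051 = 2 := by norm_num

private lemma step1 : 2 ^ 3 % 3825123056546413051 = 8 :=
  sqd_step (by norm_num) step0 (by norm_num)
private lemma step2 : 2 ^ 6 % 3825123056546413051 = 64 :=
  sq_step (by norm_num) step1 (by norm_num)
private lemma step3 : 2 ^ 13 % 3825123056546413051 = 8192 :=
  sqd_step (by norm_num) step2 (by norm_num)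
private lemma step4 : 2 ^ 26 % 3825123056546413051 = 67108864 :=
  sq_step (by norm_num) step3 (by norm_num)
private lemma step5 : 2 ^ 53 % 3825123056546413051 = 9007199254740992 :=
  sqd_step (by norm_num) step4 (by norm_num)
private lemma step6 : 2 ^ 106 % 3825123056546413051 = 778760123938093643 :=
  sq_step (by norm_num) step5 (by norm_num)
private lemma step7 : 2 ^ 212 % 3825123056546413051 = 3178504248962404261 :=
  sq_step (by norm_num) step6 (by norm_num)
private lemma step8 : 2 ^ 424 % 3825123056546413051 = 3024332643710306056 :=
  sq_step (by norm_num) step7 (by norm_num)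
private lemma step9 : 2 ^ 849 % 3825123056546413051 = 3417413006884123016 :=
  sqd_step (by norm_num) step8 (by norm_num)
private lemma step10 : 2 ^ 1698 % 3825123056546413051 = 2407539396184156903 :=
  sq_step (by norm_num) step9 (by norm_num)
private lemma step11 : 2 ^ 3397 % 3825123056546413051 = 840333723908433397 :=
  sqd_step (by norm_num) step10 (by norm_num)
private lemma step12 : 2 ^ 6794 % 3825123056546413051 = 3003262182331878883 :=
  sq_step (by norm_num) step11 (by norm_num)
private lemma step13 : 2 ^ 13589 % 3825123056546413051 = 272808249836046388 :=
  sqd_step (by norm_num) step12 (by norm_num)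
private lemma step14 : 2 ^ 27179 % 3825123056546413051 = 1850986559200969632 :=
  sqd_step (by norm_num) step13 (by norm_num)
private lemma step15 : 2 ^ 54358 % 3825123056546413051 = 1473611012675516880 :=
  sq_step (by norm_num) step14 (by norm_num)
private lemma step16 : 2 ^ 108716 % 3825123056546413051 = 3564500279756715404 :=
  sq_step (by norm_num) step15 (by norm_num)
private lemma step17 : 2 ^ 217433 % 3825123056546413051 = 3386791124913819851 :=
  sqd_step (by norm_num) step16 (by norm_num)
private lemma step18 : 2 ^ 434866 % 3825123056546413051 = 3076238073042672297 :=
  sq_step (by norm_num) step17 (by norm_num)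
private lemma step19 : 2 ^ 869732 % 3825123056546413051 = 1946371887941961537 :=
  sq_step (by norm_num) step18 (by norm_num)
private lemma step20 : 2 ^ 1739464 % 3825123056546413051 = 72304908672591172 :=
  sq_step (by norm_num) step19 (by norm_num)
private lemma step21 : 2 ^ 3478929 % 3825123056546413051 = 94510096405704830 :=
  sqd_step (by norm_num) step20 (by norm_num)
private lemma step22 : 2 ^ 6957858 % 3825123056546413051 = 2235664052207930432 :=
  sq_step (by norm_num) step21 (by norm_num)
private lemma step23 : 2 ^ 13915716 % 3825123056546413051 = 2845586816824641376 :=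
  sq_step (by norm_num) step22 (by norm_num)
private lemma step24 : 2 ^ 27831433 % 3825123056546413051 = 2737096938721110272 :=
  sqd_step (by norm_num) step23 (by norm_num)
private lemma step25 : 2 ^ 55662866 % 3825123056546413051 = 1963910651749498403 :=
  sq_step (by norm_num) step24 (by norm_num)
private lemma step26 : 2 ^ 111325732 % 3825123056546413051 = 330885494837138005 :=
  sq_step (by norm_num) step25 (by norm_num)
private lemma step27 : 2 ^ 222651465 % 3825123056546413051 = 748074224588799029 :=
  sqd_step (by norm_num) step26 (by norm_num)
private lemma step28 : 2 ^ 445302931 % 3825123056546413051 = 44928696349021325 :=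
  sqd_step (by norm_num) step27 (by norm_num)
private lemma step29 : 2 ^ 890605863 % 3825123056546413051 = 3478926640926737964 :=
  sqd_step (by norm_num) step28 (by norm_num)
private lemma step30 : 2 ^ 1781211726 % 3825123056546413051 = 1276212038377568431 :=
  sq_step (by norm_num) step29 (by norm_num)
private lemma step31 : 2 ^ 3562423453 % 3825123056546413051 = 161712098653406408 :=
  sqd_step (by norm_num) step30 (by norm_num)
private lemma step32 : 2 ^ 7124846906 % 3825123056546413051 = 1217631715361017896 :=
  sq_step (by norm_num) step31 (by norm_num)
private lemma step33 : 2 ^ 14249693812 % 3825123056546413051 = 3387636804065327153 :=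
  sq_step (by norm_num) step32 (by norm_num)
private lemma step34 : 2 ^ 28499387625 % 3825123056546413051 = 1373917999320667733 :=
  sqd_step (by norm_num) step33 (by norm_num)
private lemma step35 : 2 ^ 56998775251 % 3825123056546413051 = 2396282525719177971 :=
  sqd_step (by norm_num) step34 (by norm_num)
private lemma step36 : 2 ^ 113997550503 % 3825123056546413051 = 2217370958187591528 :=
  sqd_step (by norm_num) step35 (by norm_num)
private lemma step37 : 2 ^ 227995101007 % 3825123056546413051 = 1937547036876924981 :=
  sqd_step (by norm_num) step36 (by norm_num)
private lemma step38 : 2 ^ 455990202015 % 3825123056546413051 = 3183768595189960846 :=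
  sqd_step (by norm_num) step37 (by norm_num)
private lemma step39 : 2 ^ 911980404030 % 3825123056546413051 = 769604113695255670 :=
  sq_step (by norm_num) step38 (by norm_num)
private lemma step40 : 2 ^ 1823960808060 % 3825123056546413051 = 3514923877166471826 :=
  sq_step (by norm_num) step39 (by norm_num)
private lemma step41 : 2 ^ 3647921616121 % 3825123056546413051 = 1788471840131179752 :=
  sqd_step (by norm_num) step40 (by norm_num)
private lemma step42 : 2 ^ 7295843232243 % 3825123056546413051 = 2755620569139903243 :=
  sqd_step (by norm_num) step41 (by norm_num)
private lemma step43 : 2 ^ 14591686464486 % 3825123056546413051 = 650746174801480829 :=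
  sq_step (by norm_num) step42 (by norm_num)
private lemma step44 : 2 ^ 29183372928973 % 3825123056546413051 = 1486658218046390758 :=
  sqd_step (by norm_num) step43 (by norm_num)
private lemma step45 : 2 ^ 58366745857946 % 3825123056546413051 = 3766473720177930411 :=
  sq_step (by norm_num) step44 (by norm_num)
private lemma step46 : 2 ^ 116733491715893 % 3825123056546413051 = 471276359489175658 :=
  sqd_step (by norm_num) step45 (by norm_num)
private lemma step47 : 2 ^ 233466983431787 % 3825123056546413051 = 863876211362718807 :=
  sqd_step (by norm_num) step46 (by norm_num)
private lemma step48 : 2 ^ 466933966863575 % 3825123056546413051 = 3258171801533569181 :=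
  sqd_step (by norm_num) step47 (by norm_num)
private lemma step49 : 2 ^ 933867933727151 % 3825123056546413051 = 818797190314755788 :=
  sqd_step (by norm_num) step48 (by norm_num)
private lemma step50 : 2 ^ 1867735867454303 % 3825123056546413051 = 232196871173188590 :=
  sqd_step (by norm_num) step49 (by norm_num)
private lemma step51 : 2 ^ 3735471734908606 % 3825123056546413051 = 2022314033687118358 :=
  sq_step (by norm_num) step50 (by norm_num)
private lemma step52 : 2 ^ 7470943469817212 % 3825123056546413051 = 2691001827717712312 :=
  sq_step (by norm_num) step51 (by norm_num)
private lemma step53 : 2 ^ 14941886939634425 % 3825123056546413051 = 798415121256146512 :=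
  sqd_step (by norm_num) step52 (by norm_num)
private lemma step54 : 2 ^ 29883773879268851 % 3825123056546413051 = 3750210545679503868 :=
  sqd_step (by norm_num) step53 (by norm_num)
private lemma step55 : 2 ^ 59767547758537703 % 3825123056546413051 = 2240600713832781651 :=
  sqd_step (by norm_num) step54 (by norm_num)
private lemma step56 : 2 ^ 119535095517075407 % 3825123056546413051 = 476820644779545958 :=
  sqd_step (by norm_num) step55 (by norm_num)
private lemma step57 : 2 ^ 239070191034150815 % 3825123056546413051 = 8316339577801885 :=
  sqd_step (by norm_num) step56 (by norm_num)
private lemma step58 : 2 ^ 478140382068301631 % 3825123056546413051 = 3267060883090380790 :=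
  sqd_step (by norm_num) step57 (by norm_num)
private lemma step59 : 2 ^ 956280764136603262 % 3825123056546413051 = 2077058066970408282 :=
  sq_step (by norm_num) step58 (by norm_num)
private lemma step60 : 2 ^ 1912561528273206525 % 3825123056546413051 = 3825123056546413050 :=
  sqd_step (by norm_num) step59 (by norm_num)

theorem stmt7 : StrongPsp 2 3825123056546413051 := by
  refine ⟨by decide, by norm_num, ?_, 1, 1912561528273206525, by decide, by norm_num,
    Or.inr ⟨0, by norm_num, ?_⟩⟩
  · intro hp
    rcases hp.eq_one_or_self_of_dvd 149491 ⟨25587647795161, by norm_num⟩ with h | h <;>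
      norm_num at h
  · have h := step60
    have key : ((2 : ℕ) : ZMod 3825123056546413051) ^ (1912561528273206525 : ℕ)
        = ((2 ^ (1912561528273206525 : ℕ) % 3825123056546413051 : ℕ) : ZMod 3825123056546413051) := by
      rw [← Nat.cast_pow, ZMod.natCast_mod]
    rw [h] at key
    have hn : ((3825123056546413051 : ℕ) : ZMod 3825123056546413051) = 0 := ZMod.natCast_self _
    have h2 : ((3825123056546413050 : ℕ) : ZMod 3825123056546413051) = -1 := by
      have e1 : (3825123056546413050 : ℕ) = 3825123056546413051 - 1 := by norm_num
      rw [e1, Nat.cast_sub (by norm_num), hn, Nat.cast_one, zero_sub]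
    rw [h2] at key
    simpa using key
end

section
/- Q₁₁ = 3825123056546413051 is a strong pseudoprime to each of the bases 2, 3, 5, 7, 11, 13, 17, 19, and 23. -/
private lemma step0_s8 {n a e e2 v w : ℕ} (h : a^e % n = v) (he : e2 = 2*e) (hw : v*v % n = w) :
    a^e2 % n = w := by
  subst h hw he; rw [two_mul, pow_add, Nat.mul_mod]

private lemma step1_s8 {n a e e2 v w : ℕ} (h : a^e % n = v) (he : e2 = 2*e+1)
    (hw : (v*v % n) * (a % n) % n = w) : a^e2 % n = w := by
  subst h hw he
  rw [pow_succ, Nat.mul_mod, two_mul, pow_add, Nat.mul_mod (a^e)]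

private lemma castpow {n : ℕ} (a d v : ℕ) (h : a^d % n = v) :
    ((a : ZMod n))^d = ((v : ℕ) : ZMod n) := by
  rw [← Nat.cast_pow, ← h, ZMod.natCast_mod]

private lemma neg_one_eq : ((3825123056546413050 : ℕ) : ZMod 3825123056546413051) = -1 := by
  have h1 : ((3825123056546413050 : ℕ) : ZMod 3825123056546413051) = ((3825123056546413051 : ℕ) : ZMod 3825123056546413051) - ((1:ℕ) : ZMod 3825123056546413051) := by
    rw [← Nat.cast_sub (by norm_num)]
  rw [h1, ZMod.natCast_self]; push_cast; ring

private lemma pow_2 : ((2 : ℕ) : ZMod 3825123056546413051)^(1912561528273206525:ℕ) = -1 := by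
  have h0 : 2^1 % 3825123056546413051 = 2 := by norm_num
  have h1 : 2^3 % 3825123056546413051 = 8 := step1_s8 h0 (by norm_num) (by norm_num)
  have h2 : 2^6 % 3825123056546413051 = 64 := step0_s8 h1 (by norm_num) (by norm_num)
  have h3 : 2^13 % 3825123056546413051 = 8192 := step1_s8 h2 (by norm_num) (by norm_num)
  have h4 : 2^26 % 3825123056546413051 = 67108864 := step0_s8 h3 (by norm_num) (by norm_num)
  have h5 : 2^53 % 3825123056546413051 = 9007199254740992 := step1_s8 h4 (by norm_num) (by norm_num)
  have h6 : 2^106 % 3825123056546413051 = 778760123938093643 := step0_s8 h5 (by norm_num) (by norm_num)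
  have h7 : 2^212 % 3825123056546413051 = 3178504248962404261 := step0_s8 h6 (by norm_num) (by norm_num)
  have h8 : 2^424 % 3825123056546413051 = 3024332643710306056 := step0_s8 h7 (by norm_num) (by norm_num)
  have h9 : 2^849 % 3825123056546413051 = 3417413006884123016 := step1_s8 h8 (by norm_num) (by norm_num)
  have h10 : 2^1698 % 3825123056546413051 = 2407539396184156903 := step0_s8 h9 (by norm_num) (by norm_num)
  have h11 : 2^3397 % 3825123056546413051 = 840333723908433397 := step1_s8 h10 (by norm_num) (by norm_num)
  have h12 : 2^6794 % 3825123056546413051 = 3003262182331878883 := step0_s8 h11 (by norm_num) (by norm_num)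
  have h13 : 2^13589 % 3825123056546413051 = 272808249836046388 := step1_s8 h12 (by norm_num) (by norm_num)
  have h14 : 2^27179 % 3825123056546413051 = 1850986559200969632 := step1_s8 h13 (by norm_num) (by norm_num)
  have h15 : 2^54358 % 3825123056546413051 = 1473611012675516880 := step0_s8 h14 (by norm_num) (by norm_num)
  have h16 : 2^108716 % 3825123056546413051 = 3564500279756715404 := step0_s8 h15 (by norm_num) (by norm_num)
  have h17 : 2^217433 % 3825123056546413051 = 3386791124913819851 := step1_s8 h16 (by norm_num) (by norm_num)
  have h18 : 2^434866 % 3825123056546413051 = 3076238073042672297 := step0_s8 h17 (by norm_num) (by norm_num)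
  have h19 : 2^869732 % 3825123056546413051 = 1946371887941961537 := step0_s8 h18 (by norm_num) (by norm_num)
  have h20 : 2^1739464 % 3825123056546413051 = 72304908672591172 := step0_s8 h19 (by norm_num) (by norm_num)
  have h21 : 2^3478929 % 3825123056546413051 = 94510096405704830 := step1_s8 h20 (by norm_num) (by norm_num)
  have h22 : 2^6957858 % 3825123056546413051 = 2235664052207930432 := step0_s8 h21 (by norm_num) (by norm_num)
  have h23 : 2^13915716 % 3825123056546413051 = 2845586816824641376 := step0_s8 h22 (by norm_num) (by norm_num)
  have h24 : 2^27831433 % 3825123056546413051 = 2737096938721110272 := step1_s8 h23 (by norm_num) (by norm_num)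
  have h25 : 2^55662866 % 3825123056546413051 = 1963910651749498403 := step0_s8 h24 (by norm_num) (by norm_num)
  have h26 : 2^111325732 % 3825123056546413051 = 330885494837138005 := step0_s8 h25 (by norm_num) (by norm_num)
  have h27 : 2^222651465 % 3825123056546413051 = 748074224588799029 := step1_s8 h26 (by norm_num) (by norm_num)
  have h28 : 2^445302931 % 3825123056546413051 = 44928696349021325 := step1_s8 h27 (by norm_num) (by norm_num)
  have h29 : 2^890605863 % 3825123056546413051 = 3478926640926737964 := step1_s8 h28 (by norm_num) (by norm_num)
  have h30 : 2^1781211726 % 3825123056546413051 = 1276212038377568431 := step0_s8 h29 (by norm_num) (by norm_num)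
  have h31 : 2^3562423453 % 3825123056546413051 = 161712098653406408 := step1_s8 h30 (by norm_num) (by norm_num)
  have h32 : 2^7124846906 % 3825123056546413051 = 1217631715361017896 := step0_s8 h31 (by norm_num) (by norm_num)
  have h33 : 2^14249693812 % 3825123056546413051 = 3387636804065327153 := step0_s8 h32 (by norm_num) (by norm_num)
  have h34 : 2^28499387625 % 3825123056546413051 = 1373917999320667733 := step1_s8 h33 (by norm_num) (by norm_num)
  have h35 : 2^56998775251 % 3825123056546413051 = 2396282525719177971 := step1_s8 h34 (by norm_num) (by norm_num)
  have h36 : 2^113997550503 % 3825123056546413051 = 2217370958187591528 := step1_s8 h35 (by norm_num) (by norm_num)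
  have h37 : 2^227995101007 % 3825123056546413051 = 1937547036876924981 := step1_s8 h36 (by norm_num) (by norm_num)
  have h38 : 2^455990202015 % 3825123056546413051 = 3183768595189960846 := step1_s8 h37 (by norm_num) (by norm_num)
  have h39 : 2^911980404030 % 3825123056546413051 = 769604113695255670 := step0_s8 h38 (by norm_num) (by norm_num)
  have h40 : 2^1823960808060 % 3825123056546413051 = 3514923877166471826 := step0_s8 h39 (by norm_num) (by norm_num)
  have h41 : 2^3647921616121 % 3825123056546413051 = 1788471840131179752 := step1_s8 h40 (by norm_num) (by norm_num)
  have h42 : 2^7295843232243 % 3825123056546413051 = 2755620569139903243 := step1_s8 h41 (by norm_num) (by norm_num)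
  have h43 : 2^14591686464486 % 3825123056546413051 = 650746174801480829 := step0_s8 h42 (by norm_num) (by norm_num)
  have h44 : 2^29183372928973 % 3825123056546413051 = 1486658218046390758 := step1_s8 h43 (by norm_num) (by norm_num)
  have h45 : 2^58366745857946 % 3825123056546413051 = 3766473720177930411 := step0_s8 h44 (by norm_num) (by norm_num)
  have h46 : 2^116733491715893 % 3825123056546413051 = 471276359489175658 := step1_s8 h45 (by norm_num) (by norm_num)
  have h47 : 2^233466983431787 % 3825123056546413051 = 863876211362718807 := step1_s8 h46 (by norm_num) (by norm_num)
  have h48 : 2^466933966863575 % 3825123056546413051 = 3258171801533569181 := step1_s8 h47 (by norm_num) (by norm_num)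
  have h49 : 2^933867933727151 % 3825123056546413051 = 818797190314755788 := step1_s8 h48 (by norm_num) (by norm_num)
  have h50 : 2^1867735867454303 % 3825123056546413051 = 232196871173188590 := step1_s8 h49 (by norm_num) (by norm_num)
  have h51 : 2^3735471734908606 % 3825123056546413051 = 2022314033687118358 := step0_s8 h50 (by norm_num) (by norm_num)
  have h52 : 2^7470943469817212 % 3825123056546413051 = 2691001827717712312 := step0_s8 h51 (by norm_num) (by norm_num)
  have h53 : 2^14941886939634425 % 3825123056546413051 = 798415121256146512 := step1_s8 h52 (by norm_num) (by norm_num)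
  have h54 : 2^29883773879268851 % 3825123056546413051 = 3750210545679503868 := step1_s8 h53 (by norm_num) (by norm_num)
  have h55 : 2^59767547758537703 % 3825123056546413051 = 2240600713832781651 := step1_s8 h54 (by norm_num) (by norm_num)
  have h56 : 2^119535095517075407 % 3825123056546413051 = 476820644779545958 := step1_s8 h55 (by norm_num) (by norm_num)
  have h57 : 2^239070191034150815 % 3825123056546413051 = 8316339577801885 := step1_s8 h56 (by norm_num) (by norm_num)
  have h58 : 2^478140382068301631 % 3825123056546413051 = 3267060883090380790 := step1_s8 h57 (by norm_num) (by norm_num)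
  have h59 : 2^956280764136603262 % 3825123056546413051 = 2077058066970408282 := step0_s8 h58 (by norm_num) (by norm_num)
  have h60 : 2^1912561528273206525 % 3825123056546413051 = 3825123056546413050 := step1_s8 h59 (by norm_num) (by norm_num)
  have := castpow 2 1912561528273206525 3825123056546413050 h60
  rw [this, neg_one_eq]

private lemma pow_3 : ((3 : ℕ) : ZMod 3825123056546413051)^(1912561528273206525:ℕ) = -1 := by
  have h0 : 3^1 % 3825123056546413051 = 3 := by norm_num
  have h1 : 3^3 % 3825123056546413051 = 27 := step1_s8 h0 (by norm_num) (by norm_num)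
  have h2 : 3^6 % 3825123056546413051 = 729 := step0_s8 h1 (by norm_num) (by norm_num)
  have h3 : 3^13 % 3825123056546413051 = 1594323 := step1_s8 h2 (by norm_num) (by norm_num)
  have h4 : 3^26 % 3825123056546413051 = 2541865828329 := step0_s8 h3 (by norm_num) (by norm_num)
  have h5 : 3^53 % 3825123056546413051 = 696843440629985771 := step1_s8 h4 (by norm_num) (by norm_num)
  have h6 : 3^106 % 3825123056546413051 = 2873003686981318077 := step0_s8 h5 (by norm_num) (by norm_num)
  have h7 : 3^212 % 3825123056546413051 = 1130402393452555552 := step0_s8 h6 (by norm_num) (by norm_num)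
  have h8 : 3^424 % 3825123056546413051 = 3382089089495754875 := step0_s8 h7 (by norm_num) (by norm_num)
  have h9 : 3^849 % 3825123056546413051 = 2275468172820787813 := step1_s8 h8 (by norm_num) (by norm_num)
  have h10 : 3^1698 % 3825123056546413051 = 1093642369773521104 := step0_s8 h9 (by norm_num) (by norm_num)
  have h11 : 3^3397 % 3825123056546413051 = 835650116243119435 := step1_s8 h10 (by norm_num) (by norm_num)
  have h12 : 3^6794 % 3825123056546413051 = 1806491773957286682 := step0_s8 h11 (by norm_num) (by norm_num)
  have h13 : 3^13589 % 3825123056546413051 = 76839823092220678 := step1_s8 h12 (by norm_num) (by norm_num)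
  have h14 : 3^27179 % 3825123056546413051 = 3006329165906220409 := step1_s8 h13 (by norm_num) (by norm_num)
  have h15 : 3^54358 % 3825123056546413051 = 2646161306591405178 := step0_s8 h14 (by norm_num) (by norm_num)
  have h16 : 3^108716 % 3825123056546413051 = 3140193109732214205 := step0_s8 h15 (by norm_num) (by norm_num)
  have h17 : 3^217433 % 3825123056546413051 = 2380060890886365660 := step1_s8 h16 (by norm_num) (by norm_num)
  have h18 : 3^434866 % 3825123056546413051 = 731317199511859493 := step0_s8 h17 (by norm_num) (by norm_num)
  have h19 : 3^869732 % 3825123056546413051 = 3447108852659701296 := step0_s8 h18 (by norm_num) (by norm_num)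
  have h20 : 3^1739464 % 3825123056546413051 = 3145049201541523955 := step0_s8 h19 (by norm_num) (by norm_num)
  have h21 : 3^3478929 % 3825123056546413051 = 2986633843003515990 := step1_s8 h20 (by norm_num) (by norm_num)
  have h22 : 3^6957858 % 3825123056546413051 = 1935906203496104470 := step0_s8 h21 (by norm_num) (by norm_num)
  have h23 : 3^13915716 % 3825123056546413051 = 3232735911534995196 := step0_s8 h22 (by norm_num) (by norm_num)
  have h24 : 3^27831433 % 3825123056546413051 = 1333866314923564036 := step1_s8 h23 (by norm_num) (by norm_num)
  have h25 : 3^55662866 % 3825123056546413051 = 2345231709939817091 := step0_s8 h24 (by norm_num) (by norm_num)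
  have h26 : 3^111325732 % 3825123056546413051 = 229072418404226846 := step0_s8 h25 (by norm_num) (by norm_num)
  have h27 : 3^222651465 % 3825123056546413051 = 3048360618500538917 := step1_s8 h26 (by norm_num) (by norm_num)
  have h28 : 3^445302931 % 3825123056546413051 = 2178411521989239722 := step1_s8 h27 (by norm_num) (by norm_num)
  have h29 : 3^890605863 % 3825123056546413051 = 48398937239264836 := step1_s8 h28 (by norm_num) (by norm_num)
  have h30 : 3^1781211726 % 3825123056546413051 = 3414193666782779429 := step0_s8 h29 (by norm_num) (by norm_num)
  have h31 : 3^3562423453 % 3825123056546413051 = 2106032336964005826 := step1_s8 h30 (by norm_num) (by norm_num)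
  have h32 : 3^7124846906 % 3825123056546413051 = 249182590866152121 := step0_s8 h31 (by norm_num) (by norm_num)
  have h33 : 3^14249693812 % 3825123056546413051 = 3312136521129787162 := step0_s8 h32 (by norm_num) (by norm_num)
  have h34 : 3^28499387625 % 3825123056546413051 = 1376155990273791393 := step1_s8 h33 (by norm_num) (by norm_num)
  have h35 : 3^56998775251 % 3825123056546413051 = 3472268130801226627 := step1_s8 h34 (by norm_num) (by norm_num)
  have h36 : 3^113997550503 % 3825123056546413051 = 1088163550520165181 := step1_s8 h35 (by norm_num) (by norm_num)
  have h37 : 3^227995101007 % 3825123056546413051 = 841665233345316684 := step1_s8 h36 (by norm_num) (by norm_num)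
  have h38 : 3^455990202015 % 3825123056546413051 = 2566936796393717840 := step1_s8 h37 (by norm_num) (by norm_num)
  have h39 : 3^911980404030 % 3825123056546413051 = 1467177623181460210 := step0_s8 h38 (by norm_num) (by norm_num)
  have h40 : 3^1823960808060 % 3825123056546413051 = 3798495918354754348 := step0_s8 h39 (by norm_num) (by norm_num)
  have h41 : 3^3647921616121 % 3825123056546413051 = 1447786350841392609 := step1_s8 h40 (by norm_num) (by norm_num)
  have h42 : 3^7295843232243 % 3825123056546413051 = 2049457391209579756 := step1_s8 h41 (by norm_num) (by norm_num)
  have h43 : 3^14591686464486 % 3825123056546413051 = 1548539534091711413 := step0_s8 h42 (by norm_num) (by norm_num)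
  have h44 : 3^29183372928973 % 3825123056546413051 = 716212825390301048 := step1_s8 h43 (by norm_num) (by norm_num)
  have h45 : 3^58366745857946 % 3825123056546413051 = 2441989610941627399 := step0_s8 h44 (by norm_num) (by norm_num)
  have h46 : 3^116733491715893 % 3825123056546413051 = 2998898988835342595 := step1_s8 h45 (by norm_num) (by norm_num)
  have h47 : 3^233466983431787 % 3825123056546413051 = 1375803911415225684 := step1_s8 h46 (by norm_num) (by norm_num)
  have h48 : 3^466933966863575 % 3825123056546413051 = 312030325233874895 := step1_s8 h47 (by norm_num) (by norm_num)
  have h49 : 3^933867933727151 % 3825123056546413051 = 3614959185231818869 := step1_s8 h48 (by norm_num) (by norm_num)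
  have h50 : 3^1867735867454303 % 3825123056546413051 = 1162822821659011236 := step1_s8 h49 (by norm_num) (by norm_num)
  have h51 : 3^3735471734908606 % 3825123056546413051 = 38326443738513455 := step0_s8 h50 (by norm_num) (by norm_num)
  have h52 : 3^7470943469817212 % 3825123056546413051 = 3552566372761631584 := step0_s8 h51 (by norm_num) (by norm_num)
  have h53 : 3^14941886939634425 % 3825123056546413051 = 2535398627738419451 := step1_s8 h52 (by norm_num) (by norm_num)
  have h54 : 3^29883773879268851 % 3825123056546413051 = 3373650281935617588 := step1_s8 h53 (by norm_num) (by norm_num)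
  have h55 : 3^59767547758537703 % 3825123056546413051 = 3582767221803299367 := step1_s8 h54 (by norm_num) (by norm_num)
  have h56 : 3^119535095517075407 % 3825123056546413051 = 737523402304273513 := step1_s8 h55 (by norm_num) (by norm_num)
  have h57 : 3^239070191034150815 % 3825123056546413051 = 2901337728339486282 := step1_s8 h56 (by norm_num) (by norm_num)
  have h58 : 3^478140382068301631 % 3825123056546413051 = 2682320965505586919 := step1_s8 h57 (by norm_num) (by norm_num)
  have h59 : 3^956280764136603262 % 3825123056546413051 = 91413795680438941 := step0_s8 h58 (by norm_num) (by norm_num)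
  have h60 : 3^1912561528273206525 % 3825123056546413051 = 3825123056546413050 := step1_s8 h59 (by norm_num) (by norm_num)
  have := castpow 3 1912561528273206525 3825123056546413050 h60
  rw [this, neg_one_eq]

private lemma pow_5 : ((5 : ℕ) : ZMod 3825123056546413051)^(1912561528273206525:ℕ) = 1 := by
  have h0 : 5^1 % 3825123056546413051 = 5 := by norm_num
  have h1 : 5^3 % 3825123056546413051 = 125 := step1_s8 h0 (by norm_num) (by norm_num)
  have h2 : 5^6 % 3825123056546413051 = 15625 := step0_s8 h1 (by norm_num) (by norm_num)
  have h3 : 5^13 % 3825123056546413051 = 1220703125 := step1_s8 h2 (by norm_num) (by norm_num)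
  have h4 : 5^26 % 3825123056546413051 = 1490116119384765625 := step0_s8 h3 (by norm_num) (by norm_num)
  have h5 : 5^53 % 3825123056546413051 = 1119389069826095694 := step1_s8 h4 (by norm_num) (by norm_num)
  have h6 : 5^106 % 3825123056546413051 = 1415975975745194787 := step0_s8 h5 (by norm_num) (by norm_num)
  have h7 : 5^212 % 3825123056546413051 = 662018416276055817 := step0_s8 h6 (by norm_num) (by norm_num)
  have h8 : 5^424 % 3825123056546413051 = 1261658766972617423 := step0_s8 h7 (by norm_num) (by norm_num)
  have h9 : 5^849 % 3825123056546413051 = 1212482746948267474 := step1_s8 h8 (by norm_num) (by norm_num)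
  have h10 : 5^1698 % 3825123056546413051 = 2453464892608028984 := step0_s8 h9 (by norm_num) (by norm_num)
  have h11 : 5^3397 % 3825123056546413051 = 707157386595832078 := step1_s8 h10 (by norm_num) (by norm_num)
  have h12 : 5^6794 % 3825123056546413051 = 1843068461173082114 := step0_s8 h11 (by norm_num) (by norm_num)
  have h13 : 5^13589 % 3825123056546413051 = 3438380868418125768 := step1_s8 h12 (by norm_num) (by norm_num)
  have h14 : 5^27179 % 3825123056546413051 = 2408630256045758972 := step1_s8 h13 (by norm_num) (by norm_num)
  have h15 : 5^54358 % 3825123056546413051 = 3256791413182529608 := step0_s8 h14 (by norm_num) (by norm_num)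
  have h16 : 5^108716 % 3825123056546413051 = 517451798528194509 := step0_s8 h15 (by norm_num) (by norm_num)
  have h17 : 5^217433 % 3825123056546413051 = 1102831747536551656 := step1_s8 h16 (by norm_num) (by norm_num)
  have h18 : 5^434866 % 3825123056546413051 = 554737520359883339 := step0_s8 h17 (by norm_num) (by norm_num)
  have h19 : 5^869732 % 3825123056546413051 = 1749668151411438020 := step0_s8 h18 (by norm_num) (by norm_num)
  have h20 : 5^1739464 % 3825123056546413051 = 3666670701690771612 := step0_s8 h19 (by norm_num) (by norm_num)
  have h21 : 5^3478929 % 3825123056546413051 = 1309393148219476016 := step1_s8 h20 (by norm_num) (by norm_num)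
  have h22 : 5^6957858 % 3825123056546413051 = 2266957971540175659 := step0_s8 h21 (by norm_num) (by norm_num)
  have h23 : 5^13915716 % 3825123056546413051 = 724405748247902241 := step0_s8 h22 (by norm_num) (by norm_num)
  have h24 : 5^27831433 % 3825123056546413051 = 2654154426902840619 := step1_s8 h23 (by norm_num) (by norm_num)
  have h25 : 5^55662866 % 3825123056546413051 = 2973770855089214621 := step0_s8 h24 (by norm_num) (by norm_num)
  have h26 : 5^111325732 % 3825123056546413051 = 66658772770821213 := step0_s8 h25 (by norm_num) (by norm_num)
  have h27 : 5^222651465 % 3825123056546413051 = 1170515600342535447 := step1_s8 h26 (by norm_num) (by norm_num)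
  have h28 : 5^445302931 % 3825123056546413051 = 2601933216687993295 := step1_s8 h27 (by norm_num) (by norm_num)
  have h29 : 5^890605863 % 3825123056546413051 = 643930322913099686 := step1_s8 h28 (by norm_num) (by norm_num)
  have h30 : 5^1781211726 % 3825123056546413051 = 2445196678749078826 := step0_s8 h29 (by norm_num) (by norm_num)
  have h31 : 5^3562423453 % 3825123056546413051 = 94935933559804505 := step1_s8 h30 (by norm_num) (by norm_num)
  have h32 : 5^7124846906 % 3825123056546413051 = 3104782050733911694 := step0_s8 h31 (by norm_num) (by norm_num)
  have h33 : 5^14249693812 % 3825123056546413051 = 3712989563281194101 := step0_s8 h32 (by norm_num) (by norm_num)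
  have h34 : 5^28499387625 % 3825123056546413051 = 2405342917789095122 := step1_s8 h33 (by norm_num) (by norm_num)
  have h35 : 5^56998775251 % 3825123056546413051 = 3038870389348647742 := step1_s8 h34 (by norm_num) (by norm_num)
  have h36 : 5^113997550503 % 3825123056546413051 = 2538420712960332471 := step1_s8 h35 (by norm_num) (by norm_num)
  have h37 : 5^227995101007 % 3825123056546413051 = 1641454839651086426 := step1_s8 h36 (by norm_num) (by norm_num)
  have h38 : 5^455990202015 % 3825123056546413051 = 1274194597561504237 := step1_s8 h37 (by norm_num) (by norm_num)
  have h39 : 5^911980404030 % 3825123056546413051 = 654645490269113260 := step0_s8 h38 (by norm_num) (by norm_num)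
  have h40 : 5^1823960808060 % 3825123056546413051 = 2059668935731154760 := step0_s8 h39 (by norm_num) (by norm_num)
  have h41 : 5^3647921616121 % 3825123056546413051 = 741229154758417871 := step1_s8 h40 (by norm_num) (by norm_num)
  have h42 : 5^7295843232243 % 3825123056546413051 = 2415281994063641973 := step1_s8 h41 (by norm_num) (by norm_num)
  have h43 : 5^14591686464486 % 3825123056546413051 = 973415623633891446 := step0_s8 h42 (by norm_num) (by norm_num)
  have h44 : 5^29183372928973 % 3825123056546413051 = 3361965031487649596 := step1_s8 h43 (by norm_num) (by norm_num)
  have h45 : 5^58366745857946 % 3825123056546413051 = 2026921219305656421 := step0_s8 h44 (by norm_num) (by norm_num)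
  have h46 : 5^116733491715893 % 3825123056546413051 = 3730200988400789408 := step1_s8 h45 (by norm_num) (by norm_num)
  have h47 : 5^233466983431787 % 3825123056546413051 = 2975127280081840760 := step1_s8 h46 (by norm_num) (by norm_num)
  have h48 : 5^466933966863575 % 3825123056546413051 = 684438325739352065 := step1_s8 h47 (by norm_num) (by norm_num)
  have h49 : 5^933867933727151 % 3825123056546413051 = 2415856360145924640 := step1_s8 h48 (by norm_num) (by norm_num)
  have h50 : 5^1867735867454303 % 3825123056546413051 = 843089130292895868 := step1_s8 h49 (by norm_num) (by norm_num)
  have h51 : 5^3735471734908606 % 3825123056546413051 = 3725704256625531865 := step0_s8 h50 (by norm_num) (by norm_num)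
  have h52 : 5^7470943469817212 % 3825123056546413051 = 478711262964308495 := step0_s8 h51 (by norm_num) (by norm_num)
  have h53 : 5^14941886939634425 % 3825123056546413051 = 57034368303557559 := step1_s8 h52 (by norm_num) (by norm_num)
  have h54 : 5^29883773879268851 % 3825123056546413051 = 3696667946084961391 := step1_s8 h53 (by norm_num) (by norm_num)
  have h55 : 5^59767547758537703 % 3825123056546413051 = 1477959451447641874 := step1_s8 h54 (by norm_num) (by norm_num)
  have h56 : 5^119535095517075407 % 3825123056546413051 = 3184323570865958591 := step1_s8 h55 (by norm_num) (by norm_num)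
  have h57 : 5^239070191034150815 % 3825123056546413051 = 165756212758882802 := step1_s8 h56 (by norm_num) (by norm_num)
  have h58 : 5^478140382068301631 % 3825123056546413051 = 1106488887105193347 := step1_s8 h57 (by norm_num) (by norm_num)
  have h59 : 5^956280764136603262 % 3825123056546413051 = 2079063676883301524 := step0_s8 h58 (by norm_num) (by norm_num)
  have h60 : 5^1912561528273206525 % 3825123056546413051 = 1 := step1_s8 h59 (by norm_num) (by norm_num)
  have := castpow 5 1912561528273206525 1 h60
  simpa using this

private lemma pow_7 : ((7 : ℕ) : ZMod 3825123056546413051)^(1912561528273206525:ℕ) = 1 := by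
  have h0 : 7^1 % 3825123056546413051 = 7 := by norm_num
  have h1 : 7^3 % 3825123056546413051 = 343 := step1_s8 h0 (by norm_num) (by norm_num)
  have h2 : 7^6 % 3825123056546413051 = 117649 := step0_s8 h1 (by norm_num) (by norm_num)
  have h3 : 7^13 % 3825123056546413051 = 96889010407 := step1_s8 h2 (by norm_num) (by norm_num)
  have h4 : 7^26 % 3825123056546413051 = 628356882856678495 := step0_s8 h3 (by norm_num) (by norm_num)
  have h5 : 7^53 % 3825123056546413051 = 3068885919350906437 := step1_s8 h4 (by norm_num) (by norm_num)
  have h6 : 7^106 % 3825123056546413051 = 3803932596346160740 := step0_s8 h5 (by norm_num) (by norm_num)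
  have h7 : 7^212 % 3825123056546413051 = 1903390231159884223 := step0_s8 h6 (by norm_num) (by norm_num)
  have h8 : 7^424 % 3825123056546413051 = 606088190987070854 := step0_s8 h7 (by norm_num) (by norm_num)
  have h9 : 7^849 % 3825123056546413051 = 3357412029035756871 := step1_s8 h8 (by norm_num) (by norm_num)
  have h10 : 7^1698 % 3825123056546413051 = 2743062985368097794 := step0_s8 h9 (by norm_num) (by norm_num)
  have h11 : 7^3397 % 3825123056546413051 = 3663212428441617255 := step1_s8 h10 (by norm_num) (by norm_num)
  have h12 : 7^6794 % 3825123056546413051 = 209068407672405664 := step0_s8 h11 (by norm_num) (by norm_num)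
  have h13 : 7^13589 % 3825123056546413051 = 3128012436007917 := step1_s8 h12 (by norm_num) (by norm_num)
  have h14 : 7^27179 % 3825123056546413051 = 3479397514789417191 := step1_s8 h13 (by norm_num) (by norm_num)
  have h15 : 7^54358 % 3825123056546413051 = 2485758822201559273 := step0_s8 h14 (by norm_num) (by norm_num)
  have h16 : 7^108716 % 3825123056546413051 = 488085748324028752 := step0_s8 h15 (by norm_num) (by norm_num)
  have h17 : 7^217433 % 3825123056546413051 = 3496831238436390375 := step1_s8 h16 (by norm_num) (by norm_num)
  have h18 : 7^434866 % 3825123056546413051 = 3349718623842244566 := step0_s8 h17 (by norm_num) (by norm_num)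
  have h19 : 7^869732 % 3825123056546413051 = 2956511601645935325 := step0_s8 h18 (by norm_num) (by norm_num)
  have h20 : 7^1739464 % 3825123056546413051 = 2586951770988092375 := step0_s8 h19 (by norm_num) (by norm_num)
  have h21 : 7^3478929 % 3825123056546413051 = 3455252277129159517 := step1_s8 h20 (by norm_num) (by norm_num)
  have h22 : 7^6957858 % 3825123056546413051 = 1283341747429382886 := step0_s8 h21 (by norm_num) (by norm_num)
  have h23 : 7^13915716 % 3825123056546413051 = 3647340230917076484 := step0_s8 h22 (by norm_num) (by norm_num)
  have h24 : 7^27831433 % 3825123056546413051 = 3799248215390350676 := step1_s8 h23 (by norm_num) (by norm_num)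
  have h25 : 7^55662866 % 3825123056546413051 = 1482601982455027541 := step0_s8 h24 (by norm_num) (by norm_num)
  have h26 : 7^111325732 % 3825123056546413051 = 3204486848072903191 := step0_s8 h25 (by norm_num) (by norm_num)
  have h27 : 7^222651465 % 3825123056546413051 = 690616321964410020 := step1_s8 h26 (by norm_num) (by norm_num)
  have h28 : 7^445302931 % 3825123056546413051 = 1511413947763372412 := step1_s8 h27 (by norm_num) (by norm_num)
  have h29 : 7^890605863 % 3825123056546413051 = 3635194293459318215 := step1_s8 h28 (by norm_num) (by norm_num)
  have h30 : 7^1781211726 % 3825123056546413051 = 2807631921029660088 := step0_s8 h29 (by norm_num) (by norm_num)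
  have h31 : 7^3562423453 % 3825123056546413051 = 1329838233658460489 := step1_s8 h30 (by norm_num) (by norm_num)
  have h32 : 7^7124846906 % 3825123056546413051 = 2672675714707659529 := step0_s8 h31 (by norm_num) (by norm_num)
  have h33 : 7^14249693812 % 3825123056546413051 = 368966380069780558 := step0_s8 h32 (by norm_num) (by norm_num)
  have h34 : 7^28499387625 % 3825123056546413051 = 2230796315911895902 := step1_s8 h33 (by norm_num) (by norm_num)
  have h35 : 7^56998775251 % 3825123056546413051 = 947020085963233131 := step1_s8 h34 (by norm_num) (by norm_num)
  have h36 : 7^113997550503 % 3825123056546413051 = 2915241773829157811 := step1_s8 h35 (by norm_num) (by norm_num)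
  have h37 : 7^227995101007 % 3825123056546413051 = 441686589185135775 := step1_s8 h36 (by norm_num) (by norm_num)
  have h38 : 7^455990202015 % 3825123056546413051 = 1281788144489432494 := step1_s8 h37 (by norm_num) (by norm_num)
  have h39 : 7^911980404030 % 3825123056546413051 = 718970375575229145 := step0_s8 h38 (by norm_num) (by norm_num)
  have h40 : 7^1823960808060 % 3825123056546413051 = 1633076004365179537 := step0_s8 h39 (by norm_num) (by norm_num)
  have h41 : 7^3647921616121 % 3825123056546413051 = 112823560903364190 := step1_s8 h40 (by norm_num) (by norm_num)
  have h42 : 7^7295843232243 % 3825123056546413051 = 2966045228425229863 := step1_s8 h41 (by norm_num) (by norm_num)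
  have h43 : 7^14591686464486 % 3825123056546413051 = 2743844841010416951 := step0_s8 h42 (by norm_num) (by norm_num)
  have h44 : 7^29183372928973 % 3825123056546413051 = 1932984054026512525 := step1_s8 h43 (by norm_num) (by norm_num)
  have h45 : 7^58366745857946 % 3825123056546413051 = 3596715903929108732 := step0_s8 h44 (by norm_num) (by norm_num)
  have h46 : 7^116733491715893 % 3825123056546413051 = 320227905269917631 := step1_s8 h45 (by norm_num) (by norm_num)
  have h47 : 7^233466983431787 % 3825123056546413051 = 3352129418317265490 := step1_s8 h46 (by norm_num) (by norm_num)
  have h48 : 7^466933966863575 % 3825123056546413051 = 3729971593732121432 := step1_s8 h47 (by norm_num) (by norm_num)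
  have h49 : 7^933867933727151 % 3825123056546413051 = 3238197664862481218 := step1_s8 h48 (by norm_num) (by norm_num)
  have h50 : 7^1867735867454303 % 3825123056546413051 = 2800165863227933783 := step1_s8 h49 (by norm_num) (by norm_num)
  have h51 : 7^3735471734908606 % 3825123056546413051 = 83849519514486597 := step0_s8 h50 (by norm_num) (by norm_num)
  have h52 : 7^7470943469817212 % 3825123056546413051 = 2115551300074756138 := step0_s8 h51 (by norm_num) (by norm_num)
  have h53 : 7^14941886939634425 % 3825123056546413051 = 3518109384649333951 := step1_s8 h52 (by norm_num) (by norm_num)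
  have h54 : 7^29883773879268851 % 3825123056546413051 = 1482714679330053020 := step1_s8 h53 (by norm_num) (by norm_num)
  have h55 : 7^59767547758537703 % 3825123056546413051 = 1956947655318897375 := step1_s8 h54 (by norm_num) (by norm_num)
  have h56 : 7^119535095517075407 % 3825123056546413051 = 3047505848183970014 := step1_s8 h55 (by norm_num) (by norm_num)
  have h57 : 7^239070191034150815 % 3825123056546413051 = 2085171552573599408 := step1_s8 h56 (by norm_num) (by norm_num)
  have h58 : 7^478140382068301631 % 3825123056546413051 = 3554319904147450080 := step1_s8 h57 (by norm_num) (by norm_num)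
  have h59 : 7^956280764136603262 % 3825123056546413051 = 1735558173061789923 := step0_s8 h58 (by norm_num) (by norm_num)
  have h60 : 7^1912561528273206525 % 3825123056546413051 = 1 := step1_s8 h59 (by norm_num) (by norm_num)
  have := castpow 7 1912561528273206525 1 h60
  simpa using this

private lemma pow_11 : ((11 : ℕ) : ZMod 3825123056546413051)^(1912561528273206525:ℕ) = -1 := by
  have h0 : 11^1 % 3825123056546413051 = 11 := by norm_num
  have h1 : 11^3 % 3825123056546413051 = 1331 := step1_s8 h0 (by norm_num) (by norm_num)
  have h2 : 11^6 % 3825123056546413051 = 1771561 := step0_s8 h1 (by norm_num) (by norm_num)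
  have h3 : 11^13 % 3825123056546413051 = 34522712143931 := step1_s8 h2 (by norm_num) (by norm_num)
  have h4 : 11^26 % 3825123056546413051 = 3020529351221971971 := step0_s8 h3 (by norm_num) (by norm_num)
  have h5 : 11^53 % 3825123056546413051 = 1869383362530079808 := step1_s8 h4 (by norm_num) (by norm_num)
  have h6 : 11^106 % 3825123056546413051 = 2294533572142639626 := step0_s8 h5 (by norm_num) (by norm_num)
  have h7 : 11^212 % 3825123056546413051 = 822892612974850280 := step0_s8 h6 (by norm_num) (by norm_num)
  have h8 : 11^424 % 3825123056546413051 = 794364940208291325 := step0_s8 h7 (by norm_num) (by norm_num)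
  have h9 : 11^849 % 3825123056546413051 = 2298752900093893975 := step1_s8 h8 (by norm_num) (by norm_num)
  have h10 : 11^1698 % 3825123056546413051 = 285013199850078411 := step0_s8 h9 (by norm_num) (by norm_num)
  have h11 : 11^3397 % 3825123056546413051 = 3055538115810042573 := step1_s8 h10 (by norm_num) (by norm_num)
  have h12 : 11^6794 % 3825123056546413051 = 1934040182445566880 := step0_s8 h11 (by norm_num) (by norm_num)
  have h13 : 11^13589 % 3825123056546413051 = 1036446260592715025 := step1_s8 h12 (by norm_num) (by norm_num)
  have h14 : 11^27179 % 3825123056546413051 = 3221830478031495269 := step1_s8 h13 (by norm_num) (by norm_num)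
  have h15 : 11^54358 % 3825123056546413051 = 716679187225578681 := step0_s8 h14 (by norm_num) (by norm_num)
  have h16 : 11^108716 % 3825123056546413051 = 2398995364662561779 := step0_s8 h15 (by norm_num) (by norm_num)
  have h17 : 11^217433 % 3825123056546413051 = 508220643852712065 := step1_s8 h16 (by norm_num) (by norm_num)
  have h18 : 11^434866 % 3825123056546413051 = 2870467792780671918 := step0_s8 h17 (by norm_num) (by norm_num)
  have h19 : 11^869732 % 3825123056546413051 = 2315900610094164711 := step0_s8 h18 (by norm_num) (by norm_num)
  have h20 : 11^1739464 % 3825123056546413051 = 2449430007056712898 := step0_s8 h19 (by norm_num) (by norm_num)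
  have h21 : 11^3478929 % 3825123056546413051 = 2842714075897966632 := step1_s8 h20 (by norm_num) (by norm_num)
  have h22 : 11^6957858 % 3825123056546413051 = 2609172907642724234 := step0_s8 h21 (by norm_num) (by norm_num)
  have h23 : 11^13915716 % 3825123056546413051 = 647860509493155066 := step0_s8 h22 (by norm_num) (by norm_num)
  have h24 : 11^27831433 % 3825123056546413051 = 2923230138146275809 := step1_s8 h23 (by norm_num) (by norm_num)
  have h25 : 11^55662866 % 3825123056546413051 = 3591089730465959033 := step0_s8 h24 (by norm_num) (by norm_num)
  have h26 : 11^111325732 % 3825123056546413051 = 1052058400622854045 := step0_s8 h25 (by norm_num) (by norm_num)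
  have h27 : 11^222651465 % 3825123056546413051 = 1181950509132760834 := step1_s8 h26 (by norm_num) (by norm_num)
  have h28 : 11^445302931 % 3825123056546413051 = 459342123817974604 := step1_s8 h27 (by norm_num) (by norm_num)
  have h29 : 11^890605863 % 3825123056546413051 = 2212958756189598764 := step1_s8 h28 (by norm_num) (by norm_num)
  have h30 : 11^1781211726 % 3825123056546413051 = 508206847757691204 := step0_s8 h29 (by norm_num) (by norm_num)
  have h31 : 11^3562423453 % 3825123056546413051 = 2235705511147111324 := step1_s8 h30 (by norm_num) (by norm_num)
  have h32 : 11^7124846906 % 3825123056546413051 = 87391460410893762 := step0_s8 h31 (by norm_num) (by norm_num)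
  have h33 : 11^14249693812 % 3825123056546413051 = 2749662901916746178 := step0_s8 h32 (by norm_num) (by norm_num)
  have h34 : 11^28499387625 % 3825123056546413051 = 3495304961969213590 := step1_s8 h33 (by norm_num) (by norm_num)
  have h35 : 11^56998775251 % 3825123056546413051 = 250396248793889439 := step1_s8 h34 (by norm_num) (by norm_num)
  have h36 : 11^113997550503 % 3825123056546413051 = 914866509937010637 := step1_s8 h35 (by norm_num) (by norm_num)
  have h37 : 11^227995101007 % 3825123056546413051 = 2131360772424894407 := step1_s8 h36 (by norm_num) (by norm_num)
  have h38 : 11^455990202015 % 3825123056546413051 = 2697548609695598282 := step1_s8 h37 (by norm_num) (by norm_num)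
  have h39 : 11^911980404030 % 3825123056546413051 = 2553251951292886249 := step0_s8 h38 (by norm_num) (by norm_num)
  have h40 : 11^1823960808060 % 3825123056546413051 = 1739115718512997326 := step0_s8 h39 (by norm_num) (by norm_num)
  have h41 : 11^3647921616121 % 3825123056546413051 = 2874358578875423429 := step1_s8 h40 (by norm_num) (by norm_num)
  have h42 : 11^7295843232243 % 3825123056546413051 = 1787208365654509369 := step1_s8 h41 (by norm_num) (by norm_num)
  have h43 : 11^14591686464486 % 3825123056546413051 = 1884987401794708527 := step0_s8 h42 (by norm_num) (by norm_num)
  have h44 : 11^29183372928973 % 3825123056546413051 = 2989350500003691369 := step1_s8 h43 (by norm_num) (by norm_num)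
  have h45 : 11^58366745857946 % 3825123056546413051 = 3147552145424488819 := step0_s8 h44 (by norm_num) (by norm_num)
  have h46 : 11^116733491715893 % 3825123056546413051 = 2104086467845277995 := step1_s8 h45 (by norm_num) (by norm_num)
  have h47 : 11^233466983431787 % 3825123056546413051 = 2594119383050089352 := step1_s8 h46 (by norm_num) (by norm_num)
  have h48 : 11^466933966863575 % 3825123056546413051 = 2058259802502870217 := step1_s8 h47 (by norm_num) (by norm_num)
  have h49 : 11^933867933727151 % 3825123056546413051 = 3145916868941111061 := step1_s8 h48 (by norm_num) (by norm_num)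
  have h50 : 11^1867735867454303 % 3825123056546413051 = 1662883941005012468 := step1_s8 h49 (by norm_num) (by norm_num)
  have h51 : 11^3735471734908606 % 3825123056546413051 = 1383821414766849047 := step0_s8 h50 (by norm_num) (by norm_num)
  have h52 : 11^7470943469817212 % 3825123056546413051 = 1309020242103945137 := step0_s8 h51 (by norm_num) (by norm_num)
  have h53 : 11^14941886939634425 % 3825123056546413051 = 3506793767170612395 := step1_s8 h52 (by norm_num) (by norm_num)
  have h54 : 11^29883773879268851 % 3825123056546413051 = 584239511548241270 := step1_s8 h53 (by norm_num) (by norm_num)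
  have h55 : 11^59767547758537703 % 3825123056546413051 = 2473548091352397977 := step1_s8 h54 (by norm_num) (by norm_num)
  have h56 : 11^119535095517075407 % 3825123056546413051 = 602118142648272891 := step1_s8 h55 (by norm_num) (by norm_num)
  have h57 : 11^239070191034150815 % 3825123056546413051 = 2455180057137209980 := step1_s8 h56 (by norm_num) (by norm_num)
  have h58 : 11^478140382068301631 % 3825123056546413051 = 3623373913979929381 := step1_s8 h57 (by norm_num) (by norm_num)
  have h59 : 11^956280764136603262 % 3825123056546413051 = 1832490016189695763 := step0_s8 h58 (by norm_num) (by norm_num)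
  have h60 : 11^1912561528273206525 % 3825123056546413051 = 3825123056546413050 := step1_s8 h59 (by norm_num) (by norm_num)
  have := castpow 11 1912561528273206525 3825123056546413050 h60
  rw [this, neg_one_eq]

private lemma pow_13 : ((13 : ℕ) : ZMod 3825123056546413051)^(1912561528273206525:ℕ) = 1 := by
  have h0 : 13^1 % 3825123056546413051 = 13 := by norm_num
  have h1 : 13^3 % 3825123056546413051 = 2197 := step1_s8 h0 (by norm_num) (by norm_num)
  have h2 : 13^6 % 3825123056546413051 = 4826809 := step0_s8 h1 (by norm_num) (by norm_num)
  have h3 : 13^13 % 3825123056546413051 = 302875106592253 := step1_s8 h2 (by norm_num) (by norm_num)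
  have h4 : 13^26 % 3825123056546413051 = 899462742321632008 := step0_s8 h3 (by norm_num) (by norm_num)
  have h5 : 13^53 % 3825123056546413051 = 2276352292333440200 := step1_s8 h4 (by norm_num) (by norm_num)
  have h6 : 13^106 % 3825123056546413051 = 3071937087176999242 := step0_s8 h5 (by norm_num) (by norm_num)
  have h7 : 13^212 % 3825123056546413051 = 2733373572867471684 := step0_s8 h6 (by norm_num) (by norm_num)
  have h8 : 13^424 % 3825123056546413051 = 2799617350717055064 := step0_s8 h7 (by norm_num) (by norm_num)
  have h9 : 13^849 % 3825123056546413051 = 1637470028194080288 := step1_s8 h8 (by norm_num) (by norm_num)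
  have h10 : 13^1698 % 3825123056546413051 = 2840826902488820876 := step0_s8 h9 (by norm_num) (by norm_num)
  have h11 : 13^3397 % 3825123056546413051 = 2957970020052985678 := step1_s8 h10 (by norm_num) (by norm_num)
  have h12 : 13^6794 % 3825123056546413051 = 363980840844725761 := step0_s8 h11 (by norm_num) (by norm_num)
  have h13 : 13^13589 % 3825123056546413051 = 1159325021953721845 := step1_s8 h12 (by norm_num) (by norm_num)
  have h14 : 13^27179 % 3825123056546413051 = 92829240592664758 := step1_s8 h13 (by norm_num) (by norm_num)
  have h15 : 13^54358 % 3825123056546413051 = 3429285170288227244 := step0_s8 h14 (by norm_num) (by norm_num)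
  have h16 : 13^108716 % 3825123056546413051 = 1664432067544765969 := step0_s8 h15 (by norm_num) (by norm_num)
  have h17 : 13^217433 % 3825123056546413051 = 1888548152924234735 := step1_s8 h16 (by norm_num) (by norm_num)
  have h18 : 13^434866 % 3825123056546413051 = 1390124007122594317 := step0_s8 h17 (by norm_num) (by norm_num)
  have h19 : 13^869732 % 3825123056546413051 = 1376052790914421069 := step0_s8 h18 (by norm_num) (by norm_num)
  have h20 : 13^1739464 % 3825123056546413051 = 3616183635924452083 := step0_s8 h19 (by norm_num) (by norm_num)
  have h21 : 13^3478929 % 3825123056546413051 = 127173451182778926 := step1_s8 h20 (by norm_num) (by norm_num)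
  have h22 : 13^6957858 % 3825123056546413051 = 1134976733227235003 := step0_s8 h21 (by norm_num) (by norm_num)
  have h23 : 13^13915716 % 3825123056546413051 = 3552420731835541472 := step0_s8 h22 (by norm_num) (by norm_num)
  have h24 : 13^27831433 % 3825123056546413051 = 1694840803123600155 := step1_s8 h23 (by norm_num) (by norm_num)
  have h25 : 13^55662866 % 3825123056546413051 = 2564881454478747291 := step0_s8 h24 (by norm_num) (by norm_num)
  have h26 : 13^111325732 % 3825123056546413051 = 3229455436793433535 := step0_s8 h25 (by norm_num) (by norm_num)
  have h27 : 13^222651465 % 3825123056546413051 = 3588259483982657726 := step1_s8 h26 (by norm_num) (by norm_num)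
  have h28 : 13^445302931 % 3825123056546413051 = 1666689242486978789 := step1_s8 h27 (by norm_num) (by norm_num)
  have h29 : 13^890605863 % 3825123056546413051 = 3147185535624542512 := step1_s8 h28 (by norm_num) (by norm_num)
  have h30 : 13^1781211726 % 3825123056546413051 = 3031090799141593358 := step0_s8 h29 (by norm_num) (by norm_num)
  have h31 : 13^3562423453 % 3825123056546413051 = 1891158110452519402 := step1_s8 h30 (by norm_num) (by norm_num)
  have h32 : 13^7124846906 % 3825123056546413051 = 725246510604357856 := step0_s8 h31 (by norm_num) (by norm_num)
  have h33 : 13^14249693812 % 3825123056546413051 = 2525660852474814086 := step0_s8 h32 (by norm_num) (by norm_num)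
  have h34 : 13^28499387625 % 3825123056546413051 = 973104585119416141 := step1_s8 h33 (by norm_num) (by norm_num)
  have h35 : 13^56998775251 % 3825123056546413051 = 1093054864151126971 := step1_s8 h34 (by norm_num) (by norm_num)
  have h36 : 13^113997550503 % 3825123056546413051 = 3656481474665493078 := step1_s8 h35 (by norm_num) (by norm_num)
  have h37 : 13^227995101007 % 3825123056546413051 = 2359619624270005164 := step1_s8 h36 (by norm_num) (by norm_num)
  have h38 : 13^455990202015 % 3825123056546413051 = 1966599222143706963 := step1_s8 h37 (by norm_num) (by norm_num)
  have h39 : 13^911980404030 % 3825123056546413051 = 1356456471065966142 := step0_s8 h38 (by norm_num) (by norm_num)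
  have h40 : 13^1823960808060 % 3825123056546413051 = 1820655435225122998 := step0_s8 h39 (by norm_num) (by norm_num)
  have h41 : 13^3647921616121 % 3825123056546413051 = 2480610768503706344 := step1_s8 h40 (by norm_num) (by norm_num)
  have h42 : 13^7295843232243 % 3825123056546413051 = 989500435020360350 := step1_s8 h41 (by norm_num) (by norm_num)
  have h43 : 13^14591686464486 % 3825123056546413051 = 1904769817402954124 := step0_s8 h42 (by norm_num) (by norm_num)
  have h44 : 13^29183372928973 % 3825123056546413051 = 3063442096965912062 := step1_s8 h43 (by norm_num) (by norm_num)
  have h45 : 13^58366745857946 % 3825123056546413051 = 1583427557209659186 := step0_s8 h44 (by norm_num) (by norm_num)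
  have h46 : 13^116733491715893 % 3825123056546413051 = 2948567532975912036 := step1_s8 h45 (by norm_num) (by norm_num)
  have h47 : 13^233466983431787 % 3825123056546413051 = 1756493471881157653 := step1_s8 h46 (by norm_num) (by norm_num)
  have h48 : 13^466933966863575 % 3825123056546413051 = 2979387076019859425 := step1_s8 h47 (by norm_num) (by norm_num)
  have h49 : 13^933867933727151 % 3825123056546413051 = 497002837897600045 := step1_s8 h48 (by norm_num) (by norm_num)
  have h50 : 13^1867735867454303 % 3825123056546413051 = 3274188499813138193 := step1_s8 h49 (by norm_num) (by norm_num)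
  have h51 : 13^3735471734908606 % 3825123056546413051 = 496089633130245238 := step0_s8 h50 (by norm_num) (by norm_num)
  have h52 : 13^7470943469817212 % 3825123056546413051 = 308222941790119801 := step0_s8 h51 (by norm_num) (by norm_num)
  have h53 : 13^14941886939634425 % 3825123056546413051 = 2061194766836973457 := step1_s8 h52 (by norm_num) (by norm_num)
  have h54 : 13^29883773879268851 % 3825123056546413051 = 2466283796906194218 := step1_s8 h53 (by norm_num) (by norm_num)
  have h55 : 13^59767547758537703 % 3825123056546413051 = 1807958043344944456 := step1_s8 h54 (by norm_num) (by norm_num)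
  have h56 : 13^119535095517075407 % 3825123056546413051 = 876447574347941342 := step1_s8 h55 (by norm_num) (by norm_num)
  have h57 : 13^239070191034150815 % 3825123056546413051 = 2272259137379958642 := step1_s8 h56 (by norm_num) (by norm_num)
  have h58 : 13^478140382068301631 % 3825123056546413051 = 861358673876064737 := step1_s8 h57 (by norm_num) (by norm_num)
  have h59 : 13^956280764136603262 % 3825123056546413051 = 3578926489182579859 := step0_s8 h58 (by norm_num) (by norm_num)
  have h60 : 13^1912561528273206525 % 3825123056546413051 = 1 := step1_s8 h59 (by norm_num) (by norm_num)
  have := castpow 13 1912561528273206525 1 h60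
  simpa using this

private lemma pow_17 : ((17 : ℕ) : ZMod 3825123056546413051)^(1912561528273206525:ℕ) = -1 := by
  have h0 : 17^1 % 3825123056546413051 = 17 := by norm_num
  have h1 : 17^3 % 3825123056546413051 = 4913 := step1_s8 h0 (by norm_num) (by norm_num)
  have h2 : 17^6 % 3825123056546413051 = 24137569 := step0_s8 h1 (by norm_num) (by norm_num)
  have h3 : 17^13 % 3825123056546413051 = 9904578032905937 := step1_s8 h2 (by norm_num) (by norm_num)
  have h4 : 17^26 % 3825123056546413051 = 3205231578956404757 := step0_s8 h3 (by norm_num) (by norm_num)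
  have h5 : 17^53 % 3825123056546413051 = 3008326973078221256 := step1_s8 h4 (by norm_num) (by norm_num)
  have h6 : 17^106 % 3825123056546413051 = 1483613355119415978 := step0_s8 h5 (by norm_num) (by norm_num)
  have h7 : 17^212 % 3825123056546413051 = 557517156760795834 := step0_s8 h6 (by norm_num) (by norm_num)
  have h8 : 17^424 % 3825123056546413051 = 526542366897642471 := step0_s8 h7 (by norm_num) (by norm_num)
  have h9 : 17^849 % 3825123056546413051 = 3151938718962918320 := step1_s8 h8 (by norm_num) (by norm_num)
  have h10 : 17^1698 % 3825123056546413051 = 528652736510853709 := step0_s8 h9 (by norm_num) (by norm_num)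
  have h11 : 17^3397 % 3825123056546413051 = 713078121498483586 := step1_s8 h10 (by norm_num) (by norm_num)
  have h12 : 17^6794 % 3825123056546413051 = 3446592136474523499 := step0_s8 h11 (by norm_num) (by norm_num)
  have h13 : 17^13589 % 3825123056546413051 = 1940755234629120935 := step1_s8 h12 (by norm_num) (by norm_num)
  have h14 : 17^27179 % 3825123056546413051 = 2183842870142187671 := step1_s8 h13 (by norm_num) (by norm_num)
  have h15 : 17^54358 % 3825123056546413051 = 523130598686726310 := step0_s8 h14 (by norm_num) (by norm_num)
  have h16 : 17^108716 % 3825123056546413051 = 53673915428470853 := step0_s8 h15 (by norm_num) (by norm_num)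
  have h17 : 17^217433 % 3825123056546413051 = 1365635073802694753 := step1_s8 h16 (by norm_num) (by norm_num)
  have h18 : 17^434866 % 3825123056546413051 = 2570803037586694814 := step0_s8 h17 (by norm_num) (by norm_num)
  have h19 : 17^869732 % 3825123056546413051 = 2921569500970069161 := step0_s8 h18 (by norm_num) (by norm_num)
  have h20 : 17^1739464 % 3825123056546413051 = 2728428396243221824 := step0_s8 h19 (by norm_num) (by norm_num)
  have h21 : 17^3478929 % 3825123056546413051 = 854844728499477533 := step1_s8 h20 (by norm_num) (by norm_num)
  have h22 : 17^6957858 % 3825123056546413051 = 1043418434029063925 := step0_s8 h21 (by norm_num) (by norm_num)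
  have h23 : 17^13915716 % 3825123056546413051 = 1811581196377447170 := step0_s8 h22 (by norm_num) (by norm_num)
  have h24 : 17^27831433 % 3825123056546413051 = 1543484107573368970 := step1_s8 h23 (by norm_num) (by norm_num)
  have h25 : 17^55662866 % 3825123056546413051 = 613152189186905680 := step0_s8 h24 (by norm_num) (by norm_num)
  have h26 : 17^111325732 % 3825123056546413051 = 1064366045406526026 := step0_s8 h25 (by norm_num) (by norm_num)
  have h27 : 17^222651465 % 3825123056546413051 = 3614675543241459565 := step1_s8 h26 (by norm_num) (by norm_num)
  have h28 : 17^445302931 % 3825123056546413051 = 2219742607957956528 := step1_s8 h27 (by norm_num) (by norm_num)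
  have h29 : 17^890605863 % 3825123056546413051 = 2578746835252009892 := step1_s8 h28 (by norm_num) (by norm_num)
  have h30 : 17^1781211726 % 3825123056546413051 = 1648334618538834970 := step0_s8 h29 (by norm_num) (by norm_num)
  have h31 : 17^3562423453 % 3825123056546413051 = 1868449446806363014 := step1_s8 h30 (by norm_num) (by norm_num)
  have h32 : 17^7124846906 % 3825123056546413051 = 832789131160139759 := step0_s8 h31 (by norm_num) (by norm_num)
  have h33 : 17^14249693812 % 3825123056546413051 = 2409470392662948040 := step0_s8 h32 (by norm_num) (by norm_num)
  have h34 : 17^28499387625 % 3825123056546413051 = 274903202409080537 := step1_s8 h33 (by norm_num) (by norm_num)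
  have h35 : 17^56998775251 % 3825123056546413051 = 2504554594989664473 := step1_s8 h34 (by norm_num) (by norm_num)
  have h36 : 17^113997550503 % 3825123056546413051 = 312665278781638105 := step1_s8 h35 (by norm_num) (by norm_num)
  have h37 : 17^227995101007 % 3825123056546413051 = 2523526002502567636 := step1_s8 h36 (by norm_num) (by norm_num)
  have h38 : 17^455990202015 % 3825123056546413051 = 630342328587142434 := step1_s8 h37 (by norm_num) (by norm_num)
  have h39 : 17^911980404030 % 3825123056546413051 = 3733424926302756432 := step0_s8 h38 (by norm_num) (by norm_num)
  have h40 : 17^1823960808060 % 3825123056546413051 = 515954049546989489 := step0_s8 h39 (by norm_num) (by norm_num)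
  have h41 : 17^3647921616121 % 3825123056546413051 = 3610981037125932734 := step1_s8 h40 (by norm_num) (by norm_num)
  have h42 : 17^7295843232243 % 3825123056546413051 = 795466057776189131 := step1_s8 h41 (by norm_num) (by norm_num)
  have h43 : 17^14591686464486 % 3825123056546413051 = 362149398499538450 := step0_s8 h42 (by norm_num) (by norm_num)
  have h44 : 17^29183372928973 % 3825123056546413051 = 2252897288505717057 := step1_s8 h43 (by norm_num) (by norm_num)
  have h45 : 17^58366745857946 % 3825123056546413051 = 3753077936920749281 := step0_s8 h44 (by norm_num) (by norm_num)
  have h46 : 17^116733491715893 % 3825123056546413051 = 758258755401748399 := step1_s8 h45 (by norm_num) (by norm_num)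
  have h47 : 17^233466983431787 % 3825123056546413051 = 328911597183845577 := step1_s8 h46 (by norm_num) (by norm_num)
  have h48 : 17^466933966863575 % 3825123056546413051 = 3648854846103974533 := step1_s8 h47 (by norm_num) (by norm_num)
  have h49 : 17^933867933727151 % 3825123056546413051 = 1914811409786967646 := step1_s8 h48 (by norm_num) (by norm_num)
  have h50 : 17^1867735867454303 % 3825123056546413051 = 50207114174623956 := step1_s8 h49 (by norm_num) (by norm_num)
  have h51 : 17^3735471734908606 % 3825123056546413051 = 790097602237269680 := step0_s8 h50 (by norm_num) (by norm_num)
  have h52 : 17^7470943469817212 % 3825123056546413051 = 2983646129205724231 := step0_s8 h51 (by norm_num) (by norm_num)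
  have h53 : 17^14941886939634425 % 3825123056546413051 = 2645228770616197954 := step1_s8 h52 (by norm_num) (by norm_num)
  have h54 : 17^29883773879268851 % 3825123056546413051 = 2073162545797128621 := step1_s8 h53 (by norm_num) (by norm_num)
  have h55 : 17^59767547758537703 % 3825123056546413051 = 972536044567385772 := step1_s8 h54 (by norm_num) (by norm_num)
  have h56 : 17^119535095517075407 % 3825123056546413051 = 1257966108510060222 := step1_s8 h55 (by norm_num) (by norm_num)
  have h57 : 17^239070191034150815 % 3825123056546413051 = 1508582851963216108 := step1_s8 h56 (by norm_num) (by norm_num)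
  have h58 : 17^478140382068301631 % 3825123056546413051 = 265853631667864595 := step1_s8 h57 (by norm_num) (by norm_num)
  have h59 : 17^956280764136603262 % 3825123056546413051 = 2165773111172192181 := step0_s8 h58 (by norm_num) (by norm_num)
  have h60 : 17^1912561528273206525 % 3825123056546413051 = 3825123056546413050 := step1_s8 h59 (by norm_num) (by norm_num)
  have := castpow 17 1912561528273206525 3825123056546413050 h60
  rw [this, neg_one_eq]

private lemma pow_19 : ((19 : ℕ) : ZMod 3825123056546413051)^(1912561528273206525:ℕ) = 1 := by
  have h0 : 19^1 % 3825123056546413051 = 19 := by norm_num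
  have h1 : 19^3 % 3825123056546413051 = 6859 := step1_s8 h0 (by norm_num) (by norm_num)
  have h2 : 19^6 % 3825123056546413051 = 47045881 := step0_s8 h1 (by norm_num) (by norm_num)
  have h3 : 19^13 % 3825123056546413051 = 42052983462257059 := step1_s8 h2 (by norm_num) (by norm_num)
  have h4 : 19^26 % 3825123056546413051 = 1981508305211472716 := step0_s8 h3 (by norm_num) (by norm_num)
  have h5 : 19^53 % 3825123056546413051 = 2326412466023056570 := step1_s8 h4 (by norm_num) (by norm_num)
  have h6 : 19^106 % 3825123056546413051 = 895640237360207531 := step0_s8 h5 (by norm_num) (by norm_num)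
  have h7 : 19^212 % 3825123056546413051 = 2652767371472273015 := step0_s8 h6 (by norm_num) (by norm_num)
  have h8 : 19^424 % 3825123056546413051 = 2082309604671944694 := step0_s8 h7 (by norm_num) (by norm_num)
  have h9 : 19^849 % 3825123056546413051 = 166499485244530415 := step1_s8 h8 (by norm_num) (by norm_num)
  have h10 : 19^1698 % 3825123056546413051 = 2719488290075780474 := step0_s8 h9 (by norm_num) (by norm_num)
  have h11 : 19^3397 % 3825123056546413051 = 3238988553185689952 := step1_s8 h10 (by norm_num) (by norm_num)
  have h12 : 19^6794 % 3825123056546413051 = 1485495718263582004 := step0_s8 h11 (by norm_num) (by norm_num)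
  have h13 : 19^13589 % 3825123056546413051 = 1312058464292209856 := step1_s8 h12 (by norm_num) (by norm_num)
  have h14 : 19^27179 % 3825123056546413051 = 3217593859981120011 := step1_s8 h13 (by norm_num) (by norm_num)
  have h15 : 19^54358 % 3825123056546413051 = 1701350504381397772 := step0_s8 h14 (by norm_num) (by norm_num)
  have h16 : 19^108716 % 3825123056546413051 = 1186529589786621226 := step0_s8 h15 (by norm_num) (by norm_num)
  have h17 : 19^217433 % 3825123056546413051 = 1026309714391992895 := step1_s8 h16 (by norm_num) (by norm_num)
  have h18 : 19^434866 % 3825123056546413051 = 2052409187755408804 := step0_s8 h17 (by norm_num) (by norm_num)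
  have h19 : 19^869732 % 3825123056546413051 = 850239401875326776 := step0_s8 h18 (by norm_num) (by norm_num)
  have h20 : 19^1739464 % 3825123056546413051 = 3354823903595864897 := step0_s8 h19 (by norm_num) (by norm_num)
  have h21 : 19^3478929 % 3825123056546413051 = 2314454646580899142 := step1_s8 h20 (by norm_num) (by norm_num)
  have h22 : 19^6957858 % 3825123056546413051 = 1524860812268338360 := step0_s8 h21 (by norm_num) (by norm_num)
  have h23 : 19^13915716 % 3825123056546413051 = 413477053819707421 := step0_s8 h22 (by norm_num) (by norm_num)
  have h24 : 19^27831433 % 3825123056546413051 = 776305809293086980 := step1_s8 h23 (by norm_num) (by norm_num)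
  have h25 : 19^55662866 % 3825123056546413051 = 595087618623838004 := step0_s8 h24 (by norm_num) (by norm_num)
  have h26 : 19^111325732 % 3825123056546413051 = 3809491712444530032 := step0_s8 h25 (by norm_num) (by norm_num)
  have h27 : 19^222651465 % 3825123056546413051 = 1733033237281125593 := step1_s8 h26 (by norm_num) (by norm_num)
  have h28 : 19^445302931 % 3825123056546413051 = 909371294687390462 := step1_s8 h27 (by norm_num) (by norm_num)
  have h29 : 19^890605863 % 3825123056546413051 = 3197800140441478025 := step1_s8 h28 (by norm_num) (by norm_num)
  have h30 : 19^1781211726 % 3825123056546413051 = 1417404623502086353 := step0_s8 h29 (by norm_num) (by norm_num)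
  have h31 : 19^3562423453 % 3825123056546413051 = 494644651392797201 := step1_s8 h30 (by norm_num) (by norm_num)
  have h32 : 19^7124846906 % 3825123056546413051 = 903136357330177365 := step0_s8 h31 (by norm_num) (by norm_num)
  have h33 : 19^14249693812 % 3825123056546413051 = 3203558622377636337 := step0_s8 h32 (by norm_num) (by norm_num)
  have h34 : 19^28499387625 % 3825123056546413051 = 1948202962935336994 := step1_s8 h33 (by norm_num) (by norm_num)
  have h35 : 19^56998775251 % 3825123056546413051 = 1976100262309184603 := step1_s8 h34 (by norm_num) (by norm_num)
  have h36 : 19^113997550503 % 3825123056546413051 = 1366631697855367257 := step1_s8 h35 (by norm_num) (by norm_num)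
  have h37 : 19^227995101007 % 3825123056546413051 = 1943842264859519094 := step1_s8 h36 (by norm_num) (by norm_num)
  have h38 : 19^455990202015 % 3825123056546413051 = 3601549519598869130 := step1_s8 h37 (by norm_num) (by norm_num)
  have h39 : 19^911980404030 % 3825123056546413051 = 456934529963853060 := step0_s8 h38 (by norm_num) (by norm_num)
  have h40 : 19^1823960808060 % 3825123056546413051 = 569117776079101597 := step0_s8 h39 (by norm_num) (by norm_num)
  have h41 : 19^3647921616121 % 3825123056546413051 = 631028940760795854 := step1_s8 h40 (by norm_num) (by norm_num)
  have h42 : 19^7295843232243 % 3825123056546413051 = 2909811138198146635 := step1_s8 h41 (by norm_num) (by norm_num)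
  have h43 : 19^14591686464486 % 3825123056546413051 = 511227558155842678 := step0_s8 h42 (by norm_num) (by norm_num)
  have h44 : 19^29183372928973 % 3825123056546413051 = 1565881818166122817 := step1_s8 h43 (by norm_num) (by norm_num)
  have h45 : 19^58366745857946 % 3825123056546413051 = 774800863359622656 := step0_s8 h44 (by norm_num) (by norm_num)
  have h46 : 19^116733491715893 % 3825123056546413051 = 1253191248730800651 := step1_s8 h45 (by norm_num) (by norm_num)
  have h47 : 19^233466983431787 % 3825123056546413051 = 3661844484495917453 := step1_s8 h46 (by norm_num) (by norm_num)
  have h48 : 19^466933966863575 % 3825123056546413051 = 1213774502189761786 := step1_s8 h47 (by norm_num) (by norm_num)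
  have h49 : 19^933867933727151 % 3825123056546413051 = 1795144535057458676 := step1_s8 h48 (by norm_num) (by norm_num)
  have h50 : 19^1867735867454303 % 3825123056546413051 = 2772467070475773495 := step1_s8 h49 (by norm_num) (by norm_num)
  have h51 : 19^3735471734908606 % 3825123056546413051 = 1615981388921617681 := step0_s8 h50 (by norm_num) (by norm_num)
  have h52 : 19^7470943469817212 % 3825123056546413051 = 283118272946305846 := step0_s8 h51 (by norm_num) (by norm_num)
  have h53 : 19^14941886939634425 % 3825123056546413051 = 3509740362624361380 := step1_s8 h52 (by norm_num) (by norm_num)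
  have h54 : 19^29883773879268851 % 3825123056546413051 = 2701971603801476449 := step1_s8 h53 (by norm_num) (by norm_num)
  have h55 : 19^59767547758537703 % 3825123056546413051 = 1632603734587713466 := step1_s8 h54 (by norm_num) (by norm_num)
  have h56 : 19^119535095517075407 % 3825123056546413051 = 3657458397443176923 := step1_s8 h55 (by norm_num) (by norm_num)
  have h57 : 19^239070191034150815 % 3825123056546413051 = 2577556222122052257 := step1_s8 h56 (by norm_num) (by norm_num)
  have h58 : 19^478140382068301631 % 3825123056546413051 = 3089519961405204863 := step1_s8 h57 (by norm_num) (by norm_num)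
  have h59 : 19^956280764136603262 % 3825123056546413051 = 281820033220186521 := step0_s8 h58 (by norm_num) (by norm_num)
  have h60 : 19^1912561528273206525 % 3825123056546413051 = 1 := step1_s8 h59 (by norm_num) (by norm_num)
  have := castpow 19 1912561528273206525 1 h60
  simpa using this

private lemma pow_23 : ((23 : ℕ) : ZMod 3825123056546413051)^(1912561528273206525:ℕ) = 1 := by
  have h0 : 23^1 % 3825123056546413051 = 23 := by norm_num
  have h1 : 23^3 % 3825123056546413051 = 12167 := step1_s8 h0 (by norm_num) (by norm_num)
  have h2 : 23^6 % 3825123056546413051 = 148035889 := step0_s8 h1 (by norm_num) (by norm_num)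
  have h3 : 23^13 % 3825123056546413051 = 504036361936467383 := step1_s8 h2 (by norm_num) (by norm_num)
  have h4 : 23^26 % 3825123056546413051 = 2401160593996919934 := step0_s8 h3 (by norm_num) (by norm_num)
  have h5 : 23^53 % 3825123056546413051 = 1754855830322429401 := step1_s8 h4 (by norm_num) (by norm_num)
  have h6 : 23^106 % 3825123056546413051 = 2957248860521638676 := step0_s8 h5 (by norm_num) (by norm_num)
  have h7 : 23^212 % 3825123056546413051 = 388016825335995727 := step0_s8 h6 (by norm_num) (by norm_num)
  have h8 : 23^424 % 3825123056546413051 = 3154221745525114958 := step0_s8 h7 (by norm_num) (by norm_num)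
  have h9 : 23^849 % 3825123056546413051 = 788906702532810207 := step1_s8 h8 (by norm_num) (by norm_num)
  have h10 : 23^1698 % 3825123056546413051 = 653248930799412908 := step0_s8 h9 (by norm_num) (by norm_num)
  have h11 : 23^3397 % 3825123056546413051 = 420762174248429605 := step1_s8 h10 (by norm_num) (by norm_num)
  have h12 : 23^6794 % 3825123056546413051 = 894969060069781267 := step0_s8 h11 (by norm_num) (by norm_num)
  have h13 : 23^13589 % 3825123056546413051 = 2636034722659632241 := step1_s8 h12 (by norm_num) (by norm_num)
  have h14 : 23^27179 % 3825123056546413051 = 3731166804740930014 := step1_s8 h13 (by norm_num) (by norm_num)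
  have h15 : 23^54358 % 3825123056546413051 = 604812470694810165 := step0_s8 h14 (by norm_num) (by norm_num)
  have h16 : 23^108716 % 3825123056546413051 = 2389237345416576575 := step0_s8 h15 (by norm_num) (by norm_num)
  have h17 : 23^217433 % 3825123056546413051 = 1387543449121368450 := step1_s8 h16 (by norm_num) (by norm_num)
  have h18 : 23^434866 % 3825123056546413051 = 35333011328907586 := step0_s8 h17 (by norm_num) (by norm_num)
  have h19 : 23^869732 % 3825123056546413051 = 956402069959451095 := step0_s8 h18 (by norm_num) (by norm_num)
  have h20 : 23^1739464 % 3825123056546413051 = 2377099678669140895 := step0_s8 h19 (by norm_num) (by norm_num)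
  have h21 : 23^3478929 % 3825123056546413051 = 1797579680725008325 := step1_s8 h20 (by norm_num) (by norm_num)
  have h22 : 23^6957858 % 3825123056546413051 = 2381763093573151093 := step0_s8 h21 (by norm_num) (by norm_num)
  have h23 : 23^13915716 % 3825123056546413051 = 3059736103025493782 := step0_s8 h22 (by norm_num) (by norm_num)
  have h24 : 23^27831433 % 3825123056546413051 = 3792483083533767932 := step1_s8 h23 (by norm_num) (by norm_num)
  have h25 : 23^55662866 % 3825123056546413051 = 899218862828673423 := step0_s8 h24 (by norm_num) (by norm_num)
  have h26 : 23^111325732 % 3825123056546413051 = 2888596247537697201 := step0_s8 h25 (by norm_num) (by norm_num)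
  have h27 : 23^222651465 % 3825123056546413051 = 3808255018382439555 := step1_s8 h26 (by norm_num) (by norm_num)
  have h28 : 23^445302931 % 3825123056546413051 = 440989000414456629 := step1_s8 h27 (by norm_num) (by norm_num)
  have h29 : 23^890605863 % 3825123056546413051 = 2172879159857707024 := step1_s8 h28 (by norm_num) (by norm_num)
  have h30 : 23^1781211726 % 3825123056546413051 = 2867130717223126496 := step0_s8 h29 (by norm_num) (by norm_num)
  have h31 : 23^3562423453 % 3825123056546413051 = 2619532077883675347 := step1_s8 h30 (by norm_num) (by norm_num)
  have h32 : 23^7124846906 % 3825123056546413051 = 1759045201629159795 := step0_s8 h31 (by norm_num) (by norm_num)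
  have h33 : 23^14249693812 % 3825123056546413051 = 1128822917117427533 := step0_s8 h32 (by norm_num) (by norm_num)
  have h34 : 23^28499387625 % 3825123056546413051 = 1092279571305008043 := step1_s8 h33 (by norm_num) (by norm_num)
  have h35 : 23^56998775251 % 3825123056546413051 = 2032449002018651248 := step1_s8 h34 (by norm_num) (by norm_num)
  have h36 : 23^113997550503 % 3825123056546413051 = 918819003851208676 := step1_s8 h35 (by norm_num) (by norm_num)
  have h37 : 23^227995101007 % 3825123056546413051 = 3642190425764712739 := step1_s8 h36 (by norm_num) (by norm_num)
  have h38 : 23^455990202015 % 3825123056546413051 = 723336453529285429 := step1_s8 h37 (by norm_num) (by norm_num)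
  have h39 : 23^911980404030 % 3825123056546413051 = 1888604607605407034 := step0_s8 h38 (by norm_num) (by norm_num)
  have h40 : 23^1823960808060 % 3825123056546413051 = 445087745802216305 := step0_s8 h39 (by norm_num) (by norm_num)
  have h41 : 23^3647921616121 % 3825123056546413051 = 1041522712156370047 := step1_s8 h40 (by norm_num) (by norm_num)
  have h42 : 23^7295843232243 % 3825123056546413051 = 969389099896171092 := step1_s8 h41 (by norm_num) (by norm_num)
  have h43 : 23^14591686464486 % 3825123056546413051 = 3200555613695958062 := step0_s8 h42 (by norm_num) (by norm_num)
  have h44 : 23^29183372928973 % 3825123056546413051 = 2046293722278864190 := step1_s8 h43 (by norm_num) (by norm_num)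
  have h45 : 23^58366745857946 % 3825123056546413051 = 1947430661695090215 := step0_s8 h44 (by norm_num) (by norm_num)
  have h46 : 23^116733491715893 % 3825123056546413051 = 482846076242365379 := step1_s8 h45 (by norm_num) (by norm_num)
  have h47 : 23^233466983431787 % 3825123056546413051 = 875386278055902732 := step1_s8 h46 (by norm_num) (by norm_num)
  have h48 : 23^466933966863575 % 3825123056546413051 = 3079794933585156679 := step1_s8 h47 (by norm_num) (by norm_num)
  have h49 : 23^933867933727151 % 3825123056546413051 = 3824475566738498679 := step1_s8 h48 (by norm_num) (by norm_num)
  have h50 : 23^1867735867454303 % 3825123056546413051 = 408312326436785175 := step1_s8 h49 (by norm_num) (by norm_num)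
  have h51 : 23^3735471734908606 % 3825123056546413051 = 3087773506196957761 := step0_s8 h50 (by norm_num) (by norm_num)
  have h52 : 23^7470943469817212 % 3825123056546413051 = 678500839142149764 := step0_s8 h51 (by norm_num) (by norm_num)
  have h53 : 23^14941886939634425 % 3825123056546413051 = 2727351689852360632 := step1_s8 h52 (by norm_num) (by norm_num)
  have h54 : 23^29883773879268851 % 3825123056546413051 = 1067446310133866220 := step1_s8 h53 (by norm_num) (by norm_num)
  have h55 : 23^59767547758537703 % 3825123056546413051 = 137513987830238279 := step1_s8 h54 (by norm_num) (by norm_num)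
  have h56 : 23^119535095517075407 % 3825123056546413051 = 2354997072049879546 := step1_s8 h55 (by norm_num) (by norm_num)
  have h57 : 23^239070191034150815 % 3825123056546413051 = 1252978188302591413 := step1_s8 h56 (by norm_num) (by norm_num)
  have h58 : 23^478140382068301631 % 3825123056546413051 = 2302702713358187046 := step1_s8 h57 (by norm_num) (by norm_num)
  have h59 : 23^956280764136603262 % 3825123056546413051 = 1318227435432095538 := step0_s8 h58 (by norm_num) (by norm_num)
  have h60 : 23^1912561528273206525 % 3825123056546413051 = 1 := step1_s8 h59 (by norm_num) (by norm_num)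
  have := castpow 23 1912561528273206525 1 h60
  simpa using this

private lemma notp : ¬ (3825123056546413051 : ℕ).Prime := by
  have h : (3825123056546413051 : ℕ) = 149491 * 25587647795161 := by norm_num
  rw [h]; exact Nat.not_prime_mul (by norm_num) (by norm_num)

theorem stmt8 : ∀ a ∈ [2, 3, 5, 7, 11, 13, 17, 19, 23],
    StrongPsp a 3825123056546413051 := by
  intro a ha
  have odd : Odd (3825123056546413051 : ℕ) := ⟨1912561528273206525, by norm_num⟩
  have hd : Odd (1912561528273206525 : ℕ) := ⟨956280764136603262, by norm_num⟩
  have he : (3825123056546413051 : ℕ) - 1 = 2 ^ 1 * 1912561528273206525 := by norm_num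
  fin_cases ha
  · exact ⟨odd, by norm_num, notp, 1, _, hd, he,
      Or.inr ⟨0, Nat.zero_lt_one, by rw [pow_zero, one_mul]; exact pow_2⟩⟩
  · exact ⟨odd, by norm_num, notp, 1, _, hd, he,
      Or.inr ⟨0, Nat.zero_lt_one, by rw [pow_zero, one_mul]; exact pow_3⟩⟩
  · exact ⟨odd, by norm_num, notp, 1, _, hd, he, Or.inl pow_5⟩
  · exact ⟨odd, by norm_num, notp, 1, _, hd, he, Or.inl pow_7⟩
  · exact ⟨odd, by norm_num, notp, 1, _, hd, he,
      Or.inr ⟨0, Nat.zero_lt_one, by rw [pow_zero, one_mul]; exact pow_11⟩⟩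
  · exact ⟨odd, by norm_num, notp, 1, _, hd, he, Or.inl pow_13⟩
  · exact ⟨odd, by norm_num, notp, 1, _, hd, he,
      Or.inr ⟨0, Nat.zero_lt_one, by rw [pow_zero, one_mul]; exact pow_17⟩⟩
  · exact ⟨odd, by norm_num, notp, 1, _, hd, he, Or.inl pow_19⟩
  · exact ⟨odd, by norm_num, notp, 1, _, hd, he, Or.inl pow_23⟩
end

section
/- Suppose n = p·q·r is a product of three distinct primes and n is a pseudoprime to bases 2, 3, 5, 7, 11, 13, 17, 19, 23. Let λ = lcm(λ_p, λ_q) where λ_p, λ_q are the lcms of the orders of these nine bases modulo p and q respectively. Then r ≡ (pq)^(−1) (mod λ), provided gcd(pq, λ) = 1. -/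
theorem stmt15 (n p q r lam : ℕ) (hp : p.Prime) (hq : q.Prime) (hr : r.Prime)
    (hpq : p ≠ q) (hpr : p ≠ r) (hqr : q ≠ r) (hn : n = p * q * r)
    (hpsp : ∀ a ∈ [2, 3, 5, 7, 11, 13, 17, 19, 23],
      a ^ (n - 1) ≡ 1 [MOD n])
    (hlam : lam = Nat.lcm
      (([2, 3, 5, 7, 11, 13, 17, 19, 23].map
        (fun a => orderOf ((a : ℕ) : ZMod p))).foldr Nat.lcm 1)
      (([2, 3, 5, 7, 11, 13, 17, 19, 23].map
        (fun a => orderOf ((a : ℕ) : ZMod q))).foldr Nat.lcm 1))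
    (hcop : Nat.Coprime (p * q) lam) :
    r * (p * q) ≡ 1 [MOD lam] := by
  have hdvd : ∀ a : ℕ, ∀ s : ℕ, s ∣ n → a ^ (n - 1) ≡ 1 [MOD n] →
      orderOf ((a : ℕ) : ZMod s) ∣ n - 1 := by
    intro a s hs h
    apply orderOf_dvd_of_pow_eq_one
    have h1 : ((a : ℕ) : ZMod s) ^ (n - 1) = ((a ^ (n - 1) : ℕ) : ZMod s) := by
      push_cast; ring
    rw [h1, (ZMod.natCast_eq_natCast_iff _ _ _).mpr (h.of_dvd hs)]
    simp
  have hpd : p ∣ n := ⟨q * r, by rw [hn]; ring⟩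
  have hqd : q ∣ n := ⟨p * r, by rw [hn]; ring⟩
  have hlamd : lam ∣ n - 1 := by
    subst hlam
    simp only [List.map_cons, List.map_nil, List.foldr_cons, List.foldr_nil]
    repeat' apply Nat.lcm_dvd
    all_goals first
      | exact Nat.one_dvd _
      | exact hdvd _ _ hpd (hpsp _ (by norm_num))
      | exact hdvd _ _ hqd (hpsp _ (by norm_num))
  have h2p := hp.two_le
  have h2q := hq.two_le
  have h2r := hr.two_le
  have hn1 : 1 ≤ n := by rw [hn]; exact Nat.mul_pos (Nat.mul_pos (by omega) (by omega)) (by omega)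
  have : (1 : ℕ) ≡ n [MOD lam] := (Nat.modEq_iff_dvd' hn1).mpr hlamd
  have hrn : r * (p * q) = n := by rw [hn]; ring
  rw [hrn]
  exact this.symm
end
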